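/- arXiv:1509.07171 — 5 statements merged into one kernel-verified Lean document; each statement's English description precedes it below -/
import Mathlib

section
/- Let C be a closed braided monoidal category and A, B semigroups with B non-degenerate, such that the multiplier monoids M(A) and M(B) exist. Then for any dense and multiplicative morphism g : A → M(B) there is a unique monoid morphism g̃ : M(A) → M(B) with g̃∘i = g, where i : A → M(A) is the canonical map. -/
open CategoryTheory Category MonoidalCategory Limits

universe v u

variable {C : Type u} [Category.{v} C] [MonoidalCategory C]

/-- A semigroup multiplication is non-degenerate. -/
def NonDeg (A : C) (m : A ⊗ A ⟶ A) : Prop :=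
  (∀ X Y : C, Function.Injective (fun f : X ⟶ Y ⊗ A =>
      (f ▷ A) ≫ (α_ Y A A).hom ≫ (Y ◁ m))) ∧
  (∀ X Y : C, Function.Injective (fun g : X ⟶ A ⊗ Y =>
      (A ◁ g) ≫ (α_ A A Y).inv ≫ (m ▷ Y)))

/-- Associativity of a semigroup multiplication. -/
def SgAssoc (A : C) (m : A ⊗ A ⟶ A) : Prop :=
  (m ▷ A) ≫ m = (α_ A A A).hom ≫ (A ◁ m) ≫ m

/-- A pair (f₁, f₂) is an `𝕄`-morphism `A ⇸ B`: eq. (2). -/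
def IsMMor {A B : C} (mB : B ⊗ B ⟶ B) (f₁ : A ⊗ B ⟶ B) (f₂ : B ⊗ A ⟶ B) : Prop :=
  (f₂ ▷ B) ≫ mB = (α_ B A B).hom ≫ (B ◁ f₁) ≫ mB

/-- The first component of an `𝕄`-morphism is multiplicative. -/
def Mult₁ {A B : C} (mA : A ⊗ A ⟶ A) (f₁ : A ⊗ B ⟶ B) : Prop :=
  (mA ▷ B) ≫ f₁ = (α_ A A B).hom ≫ (A ◁ f₁) ≫ f₁

/-- The second component of an `𝕄`-morphism is multiplicative. -/
def Mult₂ {A B : C} (mA : A ⊗ A ⟶ A) (f₂ : B ⊗ A ⟶ B) : Prop :=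
  (α_ B A A).hom ≫ (B ◁ mA) ≫ f₂ = (f₂ ▷ A) ≫ f₂

/-- The standing assumptions on the class `Q` of regular epimorphisms. -/
structure QData (C : Type u) [Category.{v} C] [MonoidalCategory C] where
  Q : MorphismProperty C
  regEpi : ∀ ⦃X Y : C⦄ (f : X ⟶ Y), Q f → Nonempty (RegularEpi f)
  comp_mem : ∀ ⦃X Y Z : C⦄ (f : X ⟶ Y) (g : Y ⟶ Z), Q f → Q g → Q (f ≫ g)
  tensor_mem : ∀ ⦃X Y X' Y' : C⦄ (f : X ⟶ Y) (g : X' ⟶ Y'), Q f → Q g → Q (f ⊗ₘ g)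
  iso_mem : ∀ ⦃X Y : C⦄ (f : X ⟶ Y), IsIso f → Q f
  cancel : ∀ ⦃X Y Z : C⦄ (s : X ⟶ Y) (t : Y ⟶ Z), Q s → Q (s ≫ t) → Q t
  coeq : ∀ ⦃X Y : C⦄ (f : X ⟶ Y), Q f →
    ∃ (Z : C) (u v : Z ⟶ X) (h : u ≫ f = v ≫ f),
      Nonempty (IsColimit (Cofork.ofπ f h)) ∧
      (∀ W : C, Nonempty (IsColimit (Cofork.ofπ (f := W ◁ u) (g := W ◁ v) (W ◁ f)
        (by rw [← MonoidalCategory.whiskerLeft_comp, ← MonoidalCategory.whiskerLeft_comp, h])))) ∧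
      (∀ W : C, Nonempty (IsColimit (Cofork.ofπ (f := u ▷ W) (g := v ▷ W) (f ▷ W)
        (by rw [← MonoidalCategory.comp_whiskerRight, ← MonoidalCategory.comp_whiskerRight, h]))))

/-- The multiplier monoid `𝕄(A)` of a non-degenerate semigroup `A`, presented by its
universal property: morphisms `X ⟶ 𝕄(A)` correspond bijectively to `𝕄`-morphisms
`X ⇸ A` (Paragraph 2.7, via the pullback of `φ` and `ψ`). -/
structure MultiplierMonoid {C : Type u} [Category.{v} C] [MonoidalCategory C]
    (A : C) (m : A ⊗ A ⟶ A) where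
  M : C
  e₁ : M ⊗ A ⟶ A
  e₂ : A ⊗ M ⟶ A
  compat : IsMMor m e₁ e₂
  lift : ∀ {X : C} (f₁ : X ⊗ A ⟶ A) (f₂ : A ⊗ X ⟶ A), IsMMor m f₁ f₂ →
      ∃! f : X ⟶ M, f₁ = (f ▷ A) ≫ e₁ ∧ f₂ = (A ◁ f) ≫ e₂


section Aux
variable (QD : QData C)

lemma QData.epi {X Y : C} {f : X ⟶ Y} (hf : QD.Q f) : Epi f :=
  RegularEpi.epi f (QD.regEpi f hf).some

lemma QData.wl {W X Y : C} {f : X ⟶ Y} (hf : QD.Q f) : QD.Q (W ◁ f) := by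
  rw [← id_tensorHom]; exact QD.tensor_mem _ _ (QD.iso_mem _ inferInstance) hf

lemma QData.wr {W X Y : C} {f : X ⟶ Y} (hf : QD.Q f) : QD.Q (f ▷ W) := by
  rw [← tensorHom_id]; exact QD.tensor_mem _ _ hf (QD.iso_mem _ inferInstance)

lemma QData.epi_wl {X Y : C} {f : X ⟶ Y} (hf : QD.Q f) (W : C) : Epi (W ◁ f) := by
  obtain ⟨Z, u, v, h, _, hl, _⟩ := QD.coeq f hf
  obtain ⟨hc⟩ := hl W
  exact ⟨fun {T} a b hab => Cofork.IsColimit.hom_ext hc hab⟩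

lemma QData.epi_wr {X Y : C} {f : X ⟶ Y} (hf : QD.Q f) (W : C) : Epi (f ▷ W) := by
  obtain ⟨Z, u, v, h, _, _, hr⟩ := QD.coeq f hf
  obtain ⟨hc⟩ := hr W
  exact ⟨fun {T} a b hab => Cofork.IsColimit.hom_ext hc hab⟩

lemma QData.factor_wl {X Y : C} (f : X ⟶ Y) (hf : QD.Q f) (W : C) {T : C} (t : W ⊗ X ⟶ T)
    (H : ∀ {Z : C} (u v : Z ⟶ X), u ≫ f = v ≫ f → (W ◁ u) ≫ t = (W ◁ v) ≫ t) :
    ∃ t' : W ⊗ Y ⟶ T, (W ◁ f) ≫ t' = t := by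
  obtain ⟨Z, u, v, h, _, hl, _⟩ := QD.coeq f hf
  obtain ⟨hc⟩ := hl W
  exact ⟨hc.desc (Cofork.ofπ t (H u v h)), Cofork.IsColimit.π_desc' hc _ _⟩

lemma QData.factor_wr {X Y : C} (f : X ⟶ Y) (hf : QD.Q f) (W : C) {T : C} (t : X ⊗ W ⟶ T)
    (H : ∀ {Z : C} (u v : Z ⟶ X), u ≫ f = v ≫ f → (u ▷ W) ≫ t = (v ▷ W) ≫ t) :
    ∃ t' : Y ⊗ W ⟶ T, (f ▷ W) ≫ t' = t := by
  obtain ⟨Z, u, v, h, _, _, hr⟩ := QD.coeq f hf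
  obtain ⟨hc⟩ := hr W
  exact ⟨hc.desc (Cofork.ofπ t (H u v h)), Cofork.IsColimit.π_desc' hc _ _⟩

end Aux
set_option maxHeartbeats 2000000 in
/-- Proposition 3.6: for semigroups `A`, `B` with `B` non-degenerate, every dense and
multiplicative morphism `g : A ⟶ 𝕄(B)` extends uniquely to a monoid morphism
`g̃ : 𝕄(A) ⟶ 𝕄(B)` with `g̃ ∘ i = g`. -/
theorem extend_to_multiplierMonoid [BraidedCategory C] [MonoidalClosed C]
    (QD : QData C) {A B : C} (mA : A ⊗ A ⟶ A) (mB : B ⊗ B ⟶ B)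
    (hA : SgAssoc A mA) (hB : SgAssoc B mB) (hndB : NonDeg B mB)
    (MA : MultiplierMonoid A mA) (MB : MultiplierMonoid B mB)
    (mMA : MA.M ⊗ MA.M ⟶ MA.M) (uA : 𝟙_ C ⟶ MA.M)
    (h1A : (mMA ▷ A) ≫ MA.e₁ = (α_ MA.M MA.M A).hom ≫ (MA.M ◁ MA.e₁) ≫ MA.e₁)
    (h2A : (A ◁ mMA) ≫ MA.e₂ = (α_ A MA.M MA.M).inv ≫ (MA.e₂ ▷ MA.M) ≫ MA.e₂)
    (huA1 : (λ_ A).inv ≫ (uA ▷ A) ≫ MA.e₁ = 𝟙 A)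
    (huA2 : (ρ_ A).inv ≫ (A ◁ uA) ≫ MA.e₂ = 𝟙 A)
    (mMB : MB.M ⊗ MB.M ⟶ MB.M) (uB : 𝟙_ C ⟶ MB.M)
    (h1B : (mMB ▷ B) ≫ MB.e₁ = (α_ MB.M MB.M B).hom ≫ (MB.M ◁ MB.e₁) ≫ MB.e₁)
    (h2B : (B ◁ mMB) ≫ MB.e₂ = (α_ B MB.M MB.M).inv ≫ (MB.e₂ ▷ MB.M) ≫ MB.e₂)
    (huB1 : (λ_ B).inv ≫ (uB ▷ B) ≫ MB.e₁ = 𝟙 B)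
    (huB2 : (ρ_ B).inv ≫ (B ◁ uB) ≫ MB.e₂ = 𝟙 B)
    (i : A ⟶ MA.M) (hi₁ : mA = (i ▷ A) ≫ MA.e₁) (hi₂ : mA = (A ◁ i) ≫ MA.e₂)
    (g : A ⟶ MB.M)
    (hgd₁ : QD.Q ((g ▷ B) ≫ MB.e₁)) (hgd₂ : QD.Q ((B ◁ g) ≫ MB.e₂))
    (hgm₁ : Mult₁ mA ((g ▷ B) ≫ MB.e₁)) (hgm₂ : Mult₂ mA ((B ◁ g) ≫ MB.e₂)) :
    ∃! t : MA.M ⟶ MB.M,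
      (mMA ≫ t = (t ⊗ₘ t) ≫ mMB) ∧ (uA ≫ t = uB) ∧ (i ≫ t = g) := by
  -- right-multiplication cancellation in B
  have ndR : ∀ {X : C} (p q : X ⟶ B), (p ▷ B) ≫ mB = (q ▷ B) ≫ mB → p = q := by
    intro X p q hpq
    have lemA : ((λ_ B).inv ▷ B) ≫ (α_ (𝟙_ C) B B).hom = (λ_ (B ⊗ B)).inv := by monoidal
    have key : ∀ (r : X ⟶ B), ((r ≫ (λ_ B).inv) ▷ B) ≫ (α_ (𝟙_ C) B B).hom ≫ ((𝟙_ C) ◁ mB)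
        = (r ▷ B) ≫ mB ≫ (λ_ B).inv := by
      intro r
      calc ((r ≫ (λ_ B).inv) ▷ B) ≫ (α_ (𝟙_ C) B B).hom ≫ ((𝟙_ C) ◁ mB)
          = (r ▷ B) ≫ (((λ_ B).inv ▷ B) ≫ (α_ (𝟙_ C) B B).hom) ≫ ((𝟙_ C) ◁ mB) := by simp
        _ = (r ▷ B) ≫ (λ_ (B ⊗ B)).inv ≫ ((𝟙_ C) ◁ mB) := by rw [lemA]
        _ = (r ▷ B) ≫ mB ≫ (λ_ B).inv := by rw [← leftUnitor_inv_naturality]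
    have h2 := hndB.1 X (𝟙_ C) (a₁ := p ≫ (λ_ B).inv) (a₂ := q ≫ (λ_ B).inv)
      (by simp only [key]; rw [reassoc_of% hpq])
    exact (cancel_mono (λ_ B).inv).1 h2
  -- left-multiplication cancellation in B
  have ndL : ∀ {X : C} (p q : X ⟶ B), (B ◁ p) ≫ mB = (B ◁ q) ≫ mB → p = q := by
    intro X p q hpq
    have lemA : (B ◁ (ρ_ B).inv) ≫ (α_ B B (𝟙_ C)).inv = (ρ_ (B ⊗ B)).inv := by monoidal
    have key : ∀ (r : X ⟶ B), (B ◁ (r ≫ (ρ_ B).inv)) ≫ (α_ B B (𝟙_ C)).inv ≫ (mB ▷ (𝟙_ C))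
        = (B ◁ r) ≫ mB ≫ (ρ_ B).inv := by
      intro r
      calc (B ◁ (r ≫ (ρ_ B).inv)) ≫ (α_ B B (𝟙_ C)).inv ≫ (mB ▷ (𝟙_ C))
          = (B ◁ r) ≫ ((B ◁ (ρ_ B).inv) ≫ (α_ B B (𝟙_ C)).inv) ≫ (mB ▷ (𝟙_ C)) := by simp
        _ = (B ◁ r) ≫ (ρ_ (B ⊗ B)).inv ≫ (mB ▷ (𝟙_ C)) := by rw [lemA]
        _ = (B ◁ r) ≫ mB ≫ (ρ_ B).inv := by rw [← rightUnitor_inv_naturality]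
    have h2 := hndB.2 X (𝟙_ C) (a₁ := p ≫ (ρ_ B).inv) (a₂ := q ≫ (ρ_ B).inv)
      (by simp only [key]; rw [reassoc_of% hpq])
    exact (cancel_mono (ρ_ B).inv).1 h2
  -- compat in reversed forms
  have cB' : (MB.e₂ ▷ B) ≫ mB = (α_ B MB.M B).hom ≫ (B ◁ MB.e₁) ≫ mB := MB.compat
  have cA' : (MA.e₂ ▷ A) ≫ mA = (α_ A MA.M A).hom ≫ (A ◁ MA.e₁) ≫ mA := MA.compat
  have cB : (B ◁ MB.e₁) ≫ mB = (α_ B MB.M B).inv ≫ (MB.e₂ ▷ B) ≫ mB := by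
    rw [cB']; simp
  have cA : (A ◁ MA.e₁) ≫ mA = (α_ A MA.M A).inv ≫ (MA.e₂ ▷ A) ≫ mA := by
    rw [cA']; simp
  have h2B' : (MB.e₂ ▷ MB.M) ≫ MB.e₂ = (α_ B MB.M MB.M).hom ≫ (B ◁ mMB) ≫ MB.e₂ := by
    rw [h2B]; simp
  have h1B' : (MB.M ◁ MB.e₁) ≫ MB.e₁ = (α_ MB.M MB.M B).inv ≫ (mMB ▷ B) ≫ MB.e₁ := by
    rw [h1B]; simp
  -- the components of any morphism into MB.M form an M-morphism
  have compB : ∀ {X : C} (s : X ⟶ MB.M), (((B ◁ s) ≫ MB.e₂) ▷ B) ≫ mB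
      = (α_ B X B).hom ≫ (B ◁ ((s ▷ B) ≫ MB.e₁)) ≫ mB := by
    intro X s
    calc (((B ◁ s) ≫ MB.e₂) ▷ B) ≫ mB
        = ((B ◁ s) ▷ B) ≫ ((MB.e₂ ▷ B) ≫ mB) := by simp
      _ = ((B ◁ s) ▷ B) ≫ (α_ B MB.M B).hom ≫ (B ◁ MB.e₁) ≫ mB := by rw [cB']
      _ = (α_ B X B).hom ≫ (B ◁ (s ▷ B)) ≫ (B ◁ MB.e₁) ≫ mB := by
          rw [associator_naturality_middle_assoc]
      _ = (α_ B X B).hom ≫ (B ◁ ((s ▷ B) ≫ MB.e₁)) ≫ mB := by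
          rw [← MonoidalCategory.whiskerLeft_comp_assoc]
  have compA : ∀ {X : C} (s : X ⟶ MA.M), (((A ◁ s) ≫ MA.e₂) ▷ A) ≫ mA
      = (α_ A X A).hom ≫ (A ◁ ((s ▷ A) ≫ MA.e₁)) ≫ mA := by
    intro X s
    calc (((A ◁ s) ≫ MA.e₂) ▷ A) ≫ mA
        = ((A ◁ s) ▷ A) ≫ ((MA.e₂ ▷ A) ≫ mA) := by simp
      _ = ((A ◁ s) ▷ A) ≫ (α_ A MA.M A).hom ≫ (A ◁ MA.e₁) ≫ mA := by rw [cA']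
      _ = (α_ A X A).hom ≫ (A ◁ (s ▷ A)) ≫ (A ◁ MA.e₁) ≫ mA := by
          rw [associator_naturality_middle_assoc]
      _ = (α_ A X A).hom ≫ (A ◁ ((s ▷ A) ≫ MA.e₁)) ≫ mA := by
          rw [← MonoidalCategory.whiskerLeft_comp_assoc]
  -- key transfer : the first component is determined by the second
  have keyT : ∀ {X : C} (r : X ⟶ MB.M), (B ◁ ((r ▷ B) ≫ MB.e₁)) ≫ mB
      = (α_ B X B).inv ≫ (((B ◁ r) ≫ MB.e₂) ▷ B) ≫ mB := by
    intro X r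
    calc (B ◁ ((r ▷ B) ≫ MB.e₁)) ≫ mB
        = (B ◁ (r ▷ B)) ≫ ((B ◁ MB.e₁) ≫ mB) := by simp
      _ = (B ◁ (r ▷ B)) ≫ (α_ B MB.M B).inv ≫ (MB.e₂ ▷ B) ≫ mB := by rw [cB]
      _ = (α_ B X B).inv ≫ ((B ◁ r) ▷ B) ≫ (MB.e₂ ▷ B) ≫ mB := by
          rw [associator_inv_naturality_middle_assoc]
      _ = (α_ B X B).inv ≫ (((B ◁ r) ≫ MB.e₂) ▷ B) ≫ mB := by
          rw [← comp_whiskerRight_assoc]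
  -- extensionality via second components
  have extB2 : ∀ {X : C} {s s' : X ⟶ MB.M},
      (B ◁ s) ≫ MB.e₂ = (B ◁ s') ≫ MB.e₂ → s = s' := by
    intro X s s' h2
    have h1 : (s ▷ B) ≫ MB.e₁ = (s' ▷ B) ≫ MB.e₁ := by
      apply ndL
      rw [keyT, keyT, h2]
    obtain ⟨f, -, hu⟩ := MB.lift _ _ (compB s)
    exact (hu s ⟨rfl, rfl⟩).trans (hu s' ⟨h1, h2⟩).symm
  -- extensionality via first components
  have extB1 : ∀ {X : C} {s s' : X ⟶ MB.M},
      (s ▷ B) ≫ MB.e₁ = (s' ▷ B) ≫ MB.e₁ → s = s' := by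
    intro X s s' h1
    have h2 : (B ◁ s) ≫ MB.e₂ = (B ◁ s') ≫ MB.e₂ := by
      apply ndR
      rw [compB, compB, h1]
    obtain ⟨f, -, hu⟩ := MB.lift _ _ (compB s)
    exact (hu s ⟨rfl, rfl⟩).trans (hu s' ⟨h1, h2⟩).symm
  -- extensionality for MA (needs both components)
  have extA : ∀ {X : C} {s s' : X ⟶ MA.M},
      (s ▷ A) ≫ MA.e₁ = (s' ▷ A) ≫ MA.e₁ →
      (A ◁ s) ≫ MA.e₂ = (A ◁ s') ≫ MA.e₂ → s = s' := by
    intro X s s' h1 h2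
    obtain ⟨f, -, hu⟩ := MA.lift _ _ (compA s)
    exact (hu s ⟨rfl, rfl⟩).trans (hu s' ⟨h1, h2⟩).symm
  -- product in MB.M acting on the right of B, decomposed
  have S1 : ∀ {X Y : C} (x : X ⟶ MB.M) (y : Y ⟶ MB.M),
      (B ◁ ((x ⊗ₘ y) ≫ mMB)) ≫ MB.e₂
        = (α_ B X Y).inv ≫ (((B ◁ x) ≫ MB.e₂) ▷ Y) ≫ (B ◁ y) ≫ MB.e₂ := by
    intro X Y x y
    calc (B ◁ ((x ⊗ₘ y) ≫ mMB)) ≫ MB.e₂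
        = (B ◁ (x ▷ Y)) ≫ (B ◁ (MB.M ◁ y)) ≫ (B ◁ mMB) ≫ MB.e₂ := by
          rw [MonoidalCategory.tensorHom_def]; simp
      _ = (B ◁ (x ▷ Y)) ≫ (B ◁ (MB.M ◁ y)) ≫ (α_ B MB.M MB.M).inv ≫ (MB.e₂ ▷ MB.M) ≫ MB.e₂ := by
          rw [h2B]
      _ = (B ◁ (x ▷ Y)) ≫ (α_ B MB.M Y).inv ≫ ((B ⊗ MB.M) ◁ y) ≫ (MB.e₂ ▷ MB.M) ≫ MB.e₂ := by
          rw [associator_inv_naturality_right_assoc]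
      _ = (B ◁ (x ▷ Y)) ≫ (α_ B MB.M Y).inv ≫ (MB.e₂ ▷ Y) ≫ (B ◁ y) ≫ MB.e₂ := by
          rw [whisker_exchange_assoc]
      _ = (α_ B X Y).inv ≫ ((B ◁ x) ▷ Y) ≫ (MB.e₂ ▷ Y) ≫ (B ◁ y) ≫ MB.e₂ := by
          rw [associator_inv_naturality_middle_assoc]
      _ = (α_ B X Y).inv ≫ (((B ◁ x) ≫ MB.e₂) ▷ Y) ≫ (B ◁ y) ≫ MB.e₂ := by
          rw [← comp_whiskerRight_assoc]
  -- product in MB.M acting on the left of B, decomposed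
  have S1R : ∀ {X Y : C} (x : X ⟶ MB.M) (y : Y ⟶ MB.M),
      (((x ⊗ₘ y) ≫ mMB) ▷ B) ≫ MB.e₁
        = (α_ X Y B).hom ≫ (X ◁ ((y ▷ B) ≫ MB.e₁)) ≫ (x ▷ B) ≫ MB.e₁ := by
    intro X Y x y
    calc (((x ⊗ₘ y) ≫ mMB) ▷ B) ≫ MB.e₁
        = ((X ◁ y) ▷ B) ≫ ((x ▷ MB.M) ▷ B) ≫ (mMB ▷ B) ≫ MB.e₁ := by
          rw [tensorHom_def']; simp
      _ = ((X ◁ y) ▷ B) ≫ ((x ▷ MB.M) ▷ B) ≫ (α_ MB.M MB.M B).hom ≫ (MB.M ◁ MB.e₁) ≫ MB.e₁ := by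
          rw [h1B]
      _ = ((X ◁ y) ▷ B) ≫ (α_ X MB.M B).hom ≫ (x ▷ (MB.M ⊗ B)) ≫ (MB.M ◁ MB.e₁) ≫ MB.e₁ := by
          rw [associator_naturality_left_assoc]
      _ = ((X ◁ y) ▷ B) ≫ (α_ X MB.M B).hom ≫ (X ◁ MB.e₁) ≫ (x ▷ B) ≫ MB.e₁ := by
          rw [← whisker_exchange_assoc]
      _ = (α_ X Y B).hom ≫ (X ◁ (y ▷ B)) ≫ (X ◁ MB.e₁) ≫ (x ▷ B) ≫ MB.e₁ := by
          rw [associator_naturality_middle_assoc]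
      _ = (α_ X Y B).hom ≫ (X ◁ ((y ▷ B) ≫ MB.e₁)) ≫ (x ▷ B) ≫ MB.e₁ := by
          rw [← MonoidalCategory.whiskerLeft_comp_assoc]
  -- multiplicativity hypotheses, reversed forms
  have hgm₁' : (mA ▷ B) ≫ (g ▷ B) ≫ MB.e₁
      = (α_ A A B).hom ≫ (A ◁ ((g ▷ B) ≫ MB.e₁)) ≫ (g ▷ B) ≫ MB.e₁ := by
    have h : (mA ▷ B) ≫ ((g ▷ B) ≫ MB.e₁)
        = (α_ A A B).hom ≫ (A ◁ ((g ▷ B) ≫ MB.e₁)) ≫ ((g ▷ B) ≫ MB.e₁) := hgm₁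
    simpa using h
  have hgm₂' : (B ◁ mA) ≫ (B ◁ g) ≫ MB.e₂
      = (α_ B A A).inv ≫ (((B ◁ g) ≫ MB.e₂) ▷ A) ≫ (B ◁ g) ≫ MB.e₂ := by
    have h : (α_ B A A).hom ≫ (B ◁ mA) ≫ ((B ◁ g) ≫ MB.e₂)
        = (((B ◁ g) ≫ MB.e₂) ▷ A) ≫ ((B ◁ g) ≫ MB.e₂) := hgm₂
    rw [← h]; simp
  -- g is multiplicative as a morphism into MB.M
  have gmult : mA ≫ g = (g ⊗ₘ g) ≫ mMB := by
    refine extB2 ?_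
    calc (B ◁ (mA ≫ g)) ≫ MB.e₂
        = (B ◁ mA) ≫ (B ◁ g) ≫ MB.e₂ := by simp
      _ = (α_ B A A).inv ≫ (((B ◁ g) ≫ MB.e₂) ▷ A) ≫ (B ◁ g) ≫ MB.e₂ := hgm₂'
      _ = (B ◁ ((g ⊗ₘ g) ≫ mMB)) ≫ MB.e₂ := (S1 g g).symm
  -- split variant of keyT
  have keyTs : ∀ {X : C} (r : X ⟶ MB.M), (B ◁ (r ▷ B)) ≫ (B ◁ MB.e₁) ≫ mB
      = (α_ B X B).inv ≫ (((B ◁ r) ≫ MB.e₂) ▷ B) ≫ mB := by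
    intro X r
    rw [← MonoidalCategory.whiskerLeft_comp_assoc, keyT]
  have hgg1 : (g ▷ A) ≫ (MB.M ◁ g) ≫ mMB = mA ≫ g := by
    rw [← tensorHom_def_assoc, ← gmult]
  have hgg2 : (A ◁ g) ≫ (g ▷ MB.M) ≫ mMB = mA ≫ g := by
    rw [← tensorHom_def'_assoc, ← gmult]
  have hJ5 : (A ◁ (MA.e₁ ≫ g)) ≫ (g ▷ MB.M) ≫ mMB
      = (α_ A MA.M A).inv ≫ ((MA.e₂ ≫ g) ⊗ₘ g) ≫ mMB := by
    calc (A ◁ (MA.e₁ ≫ g)) ≫ (g ▷ MB.M) ≫ mMB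
        = (A ◁ MA.e₁) ≫ (A ◁ g) ≫ (g ▷ MB.M) ≫ mMB := by simp
      _ = (A ◁ MA.e₁) ≫ mA ≫ g := by rw [hgg2]
      _ = (α_ A MA.M A).inv ≫ (MA.e₂ ▷ A) ≫ mA ≫ g := by rw [reassoc_of% cA]
      _ = (α_ A MA.M A).inv ≫ (MA.e₂ ▷ A) ≫ (g ▷ A) ≫ (MB.M ◁ g) ≫ mMB := by rw [hgg1]
      _ = (α_ A MA.M A).inv ≫ ((MA.e₂ ≫ g) ▷ A) ≫ (MB.M ◁ g) ≫ mMB := by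
          rw [← comp_whiskerRight_assoc]
      _ = (α_ A MA.M A).inv ≫ ((MA.e₂ ≫ g) ⊗ₘ g) ≫ mMB := by rw [← tensorHom_def_assoc]
  have J : (((B ◁ g) ≫ MB.e₂) ▷ (MA.M ⊗ A)) ≫ (B ◁ (MA.e₁ ≫ g)) ≫ MB.e₂
      = (α_ B A (MA.M ⊗ A)).hom ≫ (B ◁ ((α_ A MA.M A).inv ≫ ((MA.e₂ ≫ g) ⊗ₘ g) ≫ mMB)) ≫ MB.e₂ := by
    calc (((B ◁ g) ≫ MB.e₂) ▷ (MA.M ⊗ A)) ≫ (B ◁ (MA.e₁ ≫ g)) ≫ MB.e₂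
        = ((B ⊗ A) ◁ (MA.e₁ ≫ g)) ≫ (((B ◁ g) ≫ MB.e₂) ▷ MB.M) ≫ MB.e₂ := by
          rw [← whisker_exchange_assoc]
      _ = ((B ⊗ A) ◁ (MA.e₁ ≫ g)) ≫ ((B ◁ g) ▷ MB.M) ≫ (MB.e₂ ▷ MB.M) ≫ MB.e₂ := by
          rw [comp_whiskerRight_assoc]
      _ = ((B ⊗ A) ◁ (MA.e₁ ≫ g)) ≫ ((B ◁ g) ▷ MB.M) ≫ (α_ B MB.M MB.M).hom ≫ (B ◁ mMB) ≫ MB.e₂ := by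
          rw [h2B']
      _ = ((B ⊗ A) ◁ (MA.e₁ ≫ g)) ≫ (α_ B A MB.M).hom ≫ (B ◁ (g ▷ MB.M)) ≫ (B ◁ mMB) ≫ MB.e₂ := by
          rw [associator_naturality_middle_assoc]
      _ = (α_ B A (MA.M ⊗ A)).hom ≫ (B ◁ (A ◁ (MA.e₁ ≫ g))) ≫ (B ◁ (g ▷ MB.M)) ≫ (B ◁ mMB) ≫ MB.e₂ := by
          rw [associator_naturality_right_assoc]
      _ = (α_ B A (MA.M ⊗ A)).hom ≫ (B ◁ ((A ◁ (MA.e₁ ≫ g)) ≫ (g ▷ MB.M) ≫ mMB)) ≫ MB.e₂ := by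
          simp only [MonoidalCategory.whiskerLeft_comp, assoc]
      _ = (α_ B A (MA.M ⊗ A)).hom ≫ (B ◁ ((α_ A MA.M A).inv ≫ ((MA.e₂ ≫ g) ⊗ₘ g) ≫ mMB)) ≫ MB.e₂ := by
          rw [hJ5]
  have inner2eq : (((B ◁ (MA.e₂ ≫ g)) ≫ MB.e₂) ▷ A) ≫ (B ◁ g) ≫ MB.e₂
      = (α_ B (A ⊗ MA.M) A).hom ≫ (B ◁ (((MA.e₂ ≫ g) ⊗ₘ g) ≫ mMB)) ≫ MB.e₂ := by
    rw [S1 (MA.e₂ ≫ g) g]; simp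
  have K1L : (((B ◁ g) ≫ MB.e₂) ▷ (MA.M ⊗ (A ⊗ B)))
        ≫ (B ◁ ((α_ MA.M A B).inv ≫ ((MA.e₁ ≫ g) ▷ B) ≫ MB.e₁)) ≫ mB
      = (α_ B A (MA.M ⊗ (A ⊗ B))).hom ≫ (B ◁ (α_ A MA.M (A ⊗ B)).inv)
        ≫ (α_ B (A ⊗ MA.M) (A ⊗ B)).inv ≫ (α_ (B ⊗ (A ⊗ MA.M)) A B).inv
        ≫ ((α_ B (A ⊗ MA.M) A).hom ▷ B)
        ≫ ((B ◁ ((MA.e₂ ≫ g) ⊗ₘ g)) ▷ B) ≫ ((B ◁ mMB) ▷ B) ≫ (MB.e₂ ▷ B) ≫ mB := by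
    have coh : ((B ⊗ A) ◁ (α_ MA.M A B).inv) ≫ (α_ (B ⊗ A) (MA.M ⊗ A) B).inv
          ≫ ((α_ B A (MA.M ⊗ A)).hom ▷ B) ≫ ((B ◁ (α_ A MA.M A).inv) ▷ B)
        = (α_ B A (MA.M ⊗ (A ⊗ B))).hom ≫ (B ◁ (α_ A MA.M (A ⊗ B)).inv)
          ≫ (α_ B (A ⊗ MA.M) (A ⊗ B)).inv ≫ (α_ (B ⊗ (A ⊗ MA.M)) A B).inv
          ≫ ((α_ B (A ⊗ MA.M) A).hom ▷ B) := by monoidal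
    calc (((B ◁ g) ≫ MB.e₂) ▷ (MA.M ⊗ (A ⊗ B)))
          ≫ (B ◁ ((α_ MA.M A B).inv ≫ ((MA.e₁ ≫ g) ▷ B) ≫ MB.e₁)) ≫ mB
        = (((B ◁ g) ≫ MB.e₂) ▷ (MA.M ⊗ (A ⊗ B))) ≫ (B ◁ (α_ MA.M A B).inv)
            ≫ (B ◁ ((MA.e₁ ≫ g) ▷ B)) ≫ (B ◁ MB.e₁) ≫ mB := by
          simp only [MonoidalCategory.whiskerLeft_comp, assoc]
      _ = (((B ◁ g) ≫ MB.e₂) ▷ (MA.M ⊗ (A ⊗ B))) ≫ (B ◁ (α_ MA.M A B).inv)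
            ≫ (α_ B (MA.M ⊗ A) B).inv ≫ (((B ◁ (MA.e₁ ≫ g)) ≫ MB.e₂) ▷ B) ≫ mB := by
          rw [keyTs]
      _ = ((B ⊗ A) ◁ (α_ MA.M A B).inv) ≫ (((B ◁ g) ≫ MB.e₂) ▷ ((MA.M ⊗ A) ⊗ B))
            ≫ (α_ B (MA.M ⊗ A) B).inv ≫ (((B ◁ (MA.e₁ ≫ g)) ≫ MB.e₂) ▷ B) ≫ mB := by
          rw [← whisker_exchange_assoc]
      _ = ((B ⊗ A) ◁ (α_ MA.M A B).inv) ≫ (α_ (B ⊗ A) (MA.M ⊗ A) B).inv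
            ≫ ((((B ◁ g) ≫ MB.e₂) ▷ (MA.M ⊗ A)) ▷ B)
            ≫ (((B ◁ (MA.e₁ ≫ g)) ≫ MB.e₂) ▷ B) ≫ mB := by
          rw [associator_inv_naturality_left_assoc]
      _ = ((B ⊗ A) ◁ (α_ MA.M A B).inv) ≫ (α_ (B ⊗ A) (MA.M ⊗ A) B).inv
            ≫ (((((B ◁ g) ≫ MB.e₂) ▷ (MA.M ⊗ A)) ≫ (B ◁ (MA.e₁ ≫ g)) ≫ MB.e₂) ▷ B) ≫ mB := by
          rw [← comp_whiskerRight_assoc]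
      _ = ((B ⊗ A) ◁ (α_ MA.M A B).inv) ≫ (α_ (B ⊗ A) (MA.M ⊗ A) B).inv
            ≫ (((α_ B A (MA.M ⊗ A)).hom
              ≫ (B ◁ ((α_ A MA.M A).inv ≫ ((MA.e₂ ≫ g) ⊗ₘ g) ≫ mMB)) ≫ MB.e₂) ▷ B) ≫ mB := by
          rw [J]
      _ = ((B ⊗ A) ◁ (α_ MA.M A B).inv) ≫ (α_ (B ⊗ A) (MA.M ⊗ A) B).inv
            ≫ ((α_ B A (MA.M ⊗ A)).hom ▷ B) ≫ ((B ◁ (α_ A MA.M A).inv) ▷ B)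
            ≫ ((B ◁ ((MA.e₂ ≫ g) ⊗ₘ g)) ▷ B) ≫ ((B ◁ mMB) ▷ B) ≫ (MB.e₂ ▷ B) ≫ mB := by
          simp only [MonoidalCategory.whiskerLeft_comp, comp_whiskerRight, assoc]
      _ = (α_ B A (MA.M ⊗ (A ⊗ B))).hom ≫ (B ◁ (α_ A MA.M (A ⊗ B)).inv)
            ≫ (α_ B (A ⊗ MA.M) (A ⊗ B)).inv ≫ (α_ (B ⊗ (A ⊗ MA.M)) A B).inv
            ≫ ((α_ B (A ⊗ MA.M) A).hom ▷ B)
            ≫ ((B ◁ ((MA.e₂ ≫ g) ⊗ₘ g)) ▷ B) ≫ ((B ◁ mMB) ▷ B) ≫ (MB.e₂ ▷ B) ≫ mB := by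
          rw [reassoc_of% coh]
  have K1R : ((B ⊗ A) ◁ (MA.M ◁ ((g ▷ B) ≫ MB.e₁)))
        ≫ (α_ B A (MA.M ⊗ B)).hom ≫ (B ◁ (α_ A MA.M B).inv)
        ≫ (B ◁ (((MA.e₂ ≫ g) ▷ B) ≫ MB.e₁)) ≫ mB
      = (α_ B A (MA.M ⊗ (A ⊗ B))).hom ≫ (B ◁ (α_ A MA.M (A ⊗ B)).inv)
        ≫ (α_ B (A ⊗ MA.M) (A ⊗ B)).inv ≫ (α_ (B ⊗ (A ⊗ MA.M)) A B).inv
        ≫ ((α_ B (A ⊗ MA.M) A).hom ▷ B)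
        ≫ ((B ◁ ((MA.e₂ ≫ g) ⊗ₘ g)) ▷ B) ≫ ((B ◁ mMB) ▷ B) ≫ (MB.e₂ ▷ B) ≫ mB := by
    calc ((B ⊗ A) ◁ (MA.M ◁ ((g ▷ B) ≫ MB.e₁)))
          ≫ (α_ B A (MA.M ⊗ B)).hom ≫ (B ◁ (α_ A MA.M B).inv)
          ≫ (B ◁ (((MA.e₂ ≫ g) ▷ B) ≫ MB.e₁)) ≫ mB
        = ((B ⊗ A) ◁ (MA.M ◁ ((g ▷ B) ≫ MB.e₁)))
            ≫ (α_ B A (MA.M ⊗ B)).hom ≫ (B ◁ (α_ A MA.M B).inv)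
            ≫ (B ◁ ((MA.e₂ ≫ g) ▷ B)) ≫ (B ◁ MB.e₁) ≫ mB := by
          simp only [MonoidalCategory.whiskerLeft_comp, assoc]
      _ = ((B ⊗ A) ◁ (MA.M ◁ ((g ▷ B) ≫ MB.e₁)))
            ≫ (α_ B A (MA.M ⊗ B)).hom ≫ (B ◁ (α_ A MA.M B).inv)
            ≫ (α_ B (A ⊗ MA.M) B).inv ≫ (((B ◁ (MA.e₂ ≫ g)) ≫ MB.e₂) ▷ B) ≫ mB := by
          rw [keyTs]
      _ = (α_ B A (MA.M ⊗ (A ⊗ B))).hom ≫ (B ◁ (A ◁ (MA.M ◁ ((g ▷ B) ≫ MB.e₁))))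
            ≫ (B ◁ (α_ A MA.M B).inv)
            ≫ (α_ B (A ⊗ MA.M) B).inv ≫ (((B ◁ (MA.e₂ ≫ g)) ≫ MB.e₂) ▷ B) ≫ mB := by
          rw [associator_naturality_right_assoc]
      _ = (α_ B A (MA.M ⊗ (A ⊗ B))).hom ≫ (B ◁ (α_ A MA.M (A ⊗ B)).inv)
            ≫ (B ◁ ((A ⊗ MA.M) ◁ ((g ▷ B) ≫ MB.e₁)))
            ≫ (α_ B (A ⊗ MA.M) B).inv ≫ (((B ◁ (MA.e₂ ≫ g)) ≫ MB.e₂) ▷ B) ≫ mB := by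
          rw [← MonoidalCategory.whiskerLeft_comp_assoc,
            associator_inv_naturality_right, MonoidalCategory.whiskerLeft_comp_assoc]
      _ = (α_ B A (MA.M ⊗ (A ⊗ B))).hom ≫ (B ◁ (α_ A MA.M (A ⊗ B)).inv)
            ≫ (α_ B (A ⊗ MA.M) (A ⊗ B)).inv
            ≫ ((B ⊗ (A ⊗ MA.M)) ◁ ((g ▷ B) ≫ MB.e₁))
            ≫ (((B ◁ (MA.e₂ ≫ g)) ≫ MB.e₂) ▷ B) ≫ mB := by
          rw [associator_inv_naturality_right_assoc]
      _ = (α_ B A (MA.M ⊗ (A ⊗ B))).hom ≫ (B ◁ (α_ A MA.M (A ⊗ B)).inv)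
            ≫ (α_ B (A ⊗ MA.M) (A ⊗ B)).inv
            ≫ (((B ◁ (MA.e₂ ≫ g)) ≫ MB.e₂) ▷ (A ⊗ B))
            ≫ (B ◁ ((g ▷ B) ≫ MB.e₁)) ≫ mB := by
          rw [whisker_exchange_assoc]
      _ = (α_ B A (MA.M ⊗ (A ⊗ B))).hom ≫ (B ◁ (α_ A MA.M (A ⊗ B)).inv)
            ≫ (α_ B (A ⊗ MA.M) (A ⊗ B)).inv
            ≫ (((B ◁ (MA.e₂ ≫ g)) ≫ MB.e₂) ▷ (A ⊗ B))
            ≫ (α_ B A B).inv ≫ (((B ◁ g) ≫ MB.e₂) ▷ B) ≫ mB := by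
          rw [keyT]
      _ = (α_ B A (MA.M ⊗ (A ⊗ B))).hom ≫ (B ◁ (α_ A MA.M (A ⊗ B)).inv)
            ≫ (α_ B (A ⊗ MA.M) (A ⊗ B)).inv ≫ (α_ (B ⊗ (A ⊗ MA.M)) A B).inv
            ≫ ((((B ◁ (MA.e₂ ≫ g)) ≫ MB.e₂) ▷ A) ▷ B)
            ≫ (((B ◁ g) ≫ MB.e₂) ▷ B) ≫ mB := by
          rw [associator_inv_naturality_left_assoc]
      _ = (α_ B A (MA.M ⊗ (A ⊗ B))).hom ≫ (B ◁ (α_ A MA.M (A ⊗ B)).inv)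
            ≫ (α_ B (A ⊗ MA.M) (A ⊗ B)).inv ≫ (α_ (B ⊗ (A ⊗ MA.M)) A B).inv
            ≫ (((((B ◁ (MA.e₂ ≫ g)) ≫ MB.e₂) ▷ A) ≫ (B ◁ g) ≫ MB.e₂) ▷ B) ≫ mB := by
          rw [← comp_whiskerRight_assoc]
      _ = (α_ B A (MA.M ⊗ (A ⊗ B))).hom ≫ (B ◁ (α_ A MA.M (A ⊗ B)).inv)
            ≫ (α_ B (A ⊗ MA.M) (A ⊗ B)).inv ≫ (α_ (B ⊗ (A ⊗ MA.M)) A B).inv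
            ≫ (((α_ B (A ⊗ MA.M) A).hom
              ≫ (B ◁ (((MA.e₂ ≫ g) ⊗ₘ g) ≫ mMB)) ≫ MB.e₂) ▷ B) ≫ mB := by
          rw [inner2eq]
      _ = (α_ B A (MA.M ⊗ (A ⊗ B))).hom ≫ (B ◁ (α_ A MA.M (A ⊗ B)).inv)
            ≫ (α_ B (A ⊗ MA.M) (A ⊗ B)).inv ≫ (α_ (B ⊗ (A ⊗ MA.M)) A B).inv
            ≫ ((α_ B (A ⊗ MA.M) A).hom ▷ B)
            ≫ ((B ◁ ((MA.e₂ ≫ g) ⊗ₘ g)) ▷ B) ≫ ((B ◁ mMB) ▷ B) ≫ (MB.e₂ ▷ B) ≫ mB := by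
          simp only [MonoidalCategory.whiskerLeft_comp, comp_whiskerRight, assoc]
  have K1 : (((B ◁ g) ≫ MB.e₂) ▷ (MA.M ⊗ (A ⊗ B)))
        ≫ (B ◁ ((α_ MA.M A B).inv ≫ ((MA.e₁ ≫ g) ▷ B) ≫ MB.e₁)) ≫ mB
      = ((B ⊗ A) ◁ (MA.M ◁ ((g ▷ B) ≫ MB.e₁)))
        ≫ (α_ B A (MA.M ⊗ B)).hom ≫ (B ◁ (α_ A MA.M B).inv)
        ≫ (B ◁ (((MA.e₂ ≫ g) ▷ B) ≫ MB.e₁)) ≫ mB := K1L.trans K1R.symm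
  -- existence of G₁
  have HH : ∀ {Z : C} (u : Z ⟶ A ⊗ B),
      ((((B ◁ g) ≫ MB.e₂)) ▷ (MA.M ⊗ Z))
        ≫ (B ◁ ((MA.M ◁ u) ≫ (α_ MA.M A B).inv ≫ ((MA.e₁ ≫ g) ▷ B) ≫ MB.e₁)) ≫ mB
      = ((B ⊗ A) ◁ (MA.M ◁ (u ≫ (g ▷ B) ≫ MB.e₁)))
        ≫ (α_ B A (MA.M ⊗ B)).hom ≫ (B ◁ (α_ A MA.M B).inv)
        ≫ (B ◁ (((MA.e₂ ≫ g) ▷ B) ≫ MB.e₁)) ≫ mB := by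
    intro Z u
    calc ((((B ◁ g) ≫ MB.e₂)) ▷ (MA.M ⊗ Z))
          ≫ (B ◁ ((MA.M ◁ u) ≫ (α_ MA.M A B).inv ≫ ((MA.e₁ ≫ g) ▷ B) ≫ MB.e₁)) ≫ mB
        = ((((B ◁ g) ≫ MB.e₂)) ▷ (MA.M ⊗ Z)) ≫ (B ◁ (MA.M ◁ u))
            ≫ (B ◁ ((α_ MA.M A B).inv ≫ ((MA.e₁ ≫ g) ▷ B) ≫ MB.e₁)) ≫ mB := by
          rw [MonoidalCategory.whiskerLeft_comp]; simp only [assoc]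
      _ = ((B ⊗ A) ◁ (MA.M ◁ u)) ≫ ((((B ◁ g) ≫ MB.e₂)) ▷ (MA.M ⊗ (A ⊗ B)))
            ≫ (B ◁ ((α_ MA.M A B).inv ≫ ((MA.e₁ ≫ g) ▷ B) ≫ MB.e₁)) ≫ mB := by
          rw [← whisker_exchange_assoc]
      _ = ((B ⊗ A) ◁ (MA.M ◁ u)) ≫ ((B ⊗ A) ◁ (MA.M ◁ ((g ▷ B) ≫ MB.e₁)))
            ≫ (α_ B A (MA.M ⊗ B)).hom ≫ (B ◁ (α_ A MA.M B).inv)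
            ≫ (B ◁ (((MA.e₂ ≫ g) ▷ B) ≫ MB.e₁)) ≫ mB := by
          rw [K1]
      _ = ((B ⊗ A) ◁ (MA.M ◁ (u ≫ (g ▷ B) ≫ MB.e₁)))
            ≫ (α_ B A (MA.M ⊗ B)).hom ≫ (B ◁ (α_ A MA.M B).inv)
            ≫ (B ◁ (((MA.e₂ ≫ g) ▷ B) ≫ MB.e₁)) ≫ mB := by
          rw [← MonoidalCategory.whiskerLeft_comp_assoc,
            ← MonoidalCategory.whiskerLeft_comp MA.M u ((g ▷ B) ≫ MB.e₁)]
  obtain ⟨G₁, hG₁⟩ : ∃ G₁ : MA.M ⊗ B ⟶ B, (MA.M ◁ ((g ▷ B) ≫ MB.e₁)) ≫ G₁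
      = (α_ MA.M A B).inv ≫ ((MA.e₁ ≫ g) ▷ B) ≫ MB.e₁ := by
    apply QD.factor_wl _ hgd₁
    intro Z u v huv
    apply ndL
    haveI := QD.epi_wr hgd₂ (MA.M ⊗ Z)
    rw [← cancel_epi ((((B ◁ g) ≫ MB.e₂)) ▷ (MA.M ⊗ Z))]
    rw [HH u, HH v, huv]
  -- the C2' identity : action of h' composed with g₁ equals α ≫ K1-LHS
  have C2'L : (((B ⊗ A) ⊗ MA.M) ◁ ((g ▷ B) ≫ MB.e₁))
        ≫ (((α_ B A MA.M).hom ≫ (B ◁ (MA.e₂ ≫ g)) ≫ MB.e₂) ▷ B) ≫ mB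
      = (((B ⊗ A) ⊗ MA.M) ◁ ((g ▷ B) ≫ MB.e₁))
        ≫ ((α_ B A MA.M).hom ▷ B) ≫ (α_ B (A ⊗ MA.M) B).hom
        ≫ (B ◁ ((MA.e₂ ≫ g) ▷ B)) ≫ (B ◁ MB.e₁) ≫ mB := by
    calc (((B ⊗ A) ⊗ MA.M) ◁ ((g ▷ B) ≫ MB.e₁))
          ≫ (((α_ B A MA.M).hom ≫ (B ◁ (MA.e₂ ≫ g)) ≫ MB.e₂) ▷ B) ≫ mB
        = (((B ⊗ A) ⊗ MA.M) ◁ ((g ▷ B) ≫ MB.e₁))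
            ≫ ((α_ B A MA.M).hom ▷ B) ≫ ((B ◁ (MA.e₂ ≫ g)) ▷ B) ≫ (MB.e₂ ▷ B) ≫ mB := by
          simp only [comp_whiskerRight, assoc]
      _ = (((B ⊗ A) ⊗ MA.M) ◁ ((g ▷ B) ≫ MB.e₁))
            ≫ ((α_ B A MA.M).hom ▷ B) ≫ ((B ◁ (MA.e₂ ≫ g)) ▷ B)
            ≫ (α_ B MB.M B).hom ≫ (B ◁ MB.e₁) ≫ mB := by
          rw [cB']
      _ = (((B ⊗ A) ⊗ MA.M) ◁ ((g ▷ B) ≫ MB.e₁))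
            ≫ ((α_ B A MA.M).hom ▷ B) ≫ (α_ B (A ⊗ MA.M) B).hom
            ≫ (B ◁ ((MA.e₂ ≫ g) ▷ B)) ≫ (B ◁ MB.e₁) ≫ mB := by
          rw [associator_naturality_middle_assoc]
  have C2'R : (α_ (B ⊗ A) MA.M (A ⊗ B)).hom
        ≫ ((B ⊗ A) ◁ (MA.M ◁ ((g ▷ B) ≫ MB.e₁)))
        ≫ (α_ B A (MA.M ⊗ B)).hom ≫ (B ◁ (α_ A MA.M B).inv)
        ≫ (B ◁ (((MA.e₂ ≫ g) ▷ B) ≫ MB.e₁)) ≫ mB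
      = (((B ⊗ A) ⊗ MA.M) ◁ ((g ▷ B) ≫ MB.e₁))
        ≫ ((α_ B A MA.M).hom ▷ B) ≫ (α_ B (A ⊗ MA.M) B).hom
        ≫ (B ◁ ((MA.e₂ ≫ g) ▷ B)) ≫ (B ◁ MB.e₁) ≫ mB := by
    have coh2 : ((α_ B A MA.M).hom ▷ B) ≫ (α_ B (A ⊗ MA.M) B).hom
        = (α_ (B ⊗ A) MA.M B).hom ≫ (α_ B A (MA.M ⊗ B)).hom ≫ (B ◁ (α_ A MA.M B).inv) := by
      monoidal
    calc (α_ (B ⊗ A) MA.M (A ⊗ B)).hom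
          ≫ ((B ⊗ A) ◁ (MA.M ◁ ((g ▷ B) ≫ MB.e₁)))
          ≫ (α_ B A (MA.M ⊗ B)).hom ≫ (B ◁ (α_ A MA.M B).inv)
          ≫ (B ◁ (((MA.e₂ ≫ g) ▷ B) ≫ MB.e₁)) ≫ mB
        = (((B ⊗ A) ⊗ MA.M) ◁ ((g ▷ B) ≫ MB.e₁)) ≫ (α_ (B ⊗ A) MA.M B).hom
            ≫ (α_ B A (MA.M ⊗ B)).hom ≫ (B ◁ (α_ A MA.M B).inv)
            ≫ (B ◁ (((MA.e₂ ≫ g) ▷ B) ≫ MB.e₁)) ≫ mB := by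
          rw [← associator_naturality_right_assoc]
      _ = (((B ⊗ A) ⊗ MA.M) ◁ ((g ▷ B) ≫ MB.e₁)) ≫ (α_ (B ⊗ A) MA.M B).hom
            ≫ (α_ B A (MA.M ⊗ B)).hom ≫ (B ◁ (α_ A MA.M B).inv)
            ≫ (B ◁ ((MA.e₂ ≫ g) ▷ B)) ≫ (B ◁ MB.e₁) ≫ mB := by
          rw [MonoidalCategory.whiskerLeft_comp B ((MA.e₂ ≫ g) ▷ B) MB.e₁]; simp only [assoc]
      _ = (((B ⊗ A) ⊗ MA.M) ◁ ((g ▷ B) ≫ MB.e₁))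
            ≫ ((α_ B A MA.M).hom ▷ B) ≫ (α_ B (A ⊗ MA.M) B).hom
            ≫ (B ◁ ((MA.e₂ ≫ g) ▷ B)) ≫ (B ◁ MB.e₁) ≫ mB := by
          rw [← reassoc_of% coh2]
  have C2' : (((B ⊗ A) ⊗ MA.M) ◁ ((g ▷ B) ≫ MB.e₁))
        ≫ (((α_ B A MA.M).hom ≫ (B ◁ (MA.e₂ ≫ g)) ≫ MB.e₂) ▷ B) ≫ mB
      = (α_ (B ⊗ A) MA.M (A ⊗ B)).hom
        ≫ (((B ◁ g) ≫ MB.e₂) ▷ (MA.M ⊗ (A ⊗ B)))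
        ≫ (B ◁ ((α_ MA.M A B).inv ≫ ((MA.e₁ ≫ g) ▷ B) ≫ MB.e₁)) ≫ mB := by
    rw [K1]
    exact C2'L.trans C2'R.symm
  -- existence of G₂
  have HH₂ : ∀ {Z : C} (u : Z ⟶ B ⊗ A),
      ((Z ⊗ MA.M) ◁ ((g ▷ B) ≫ MB.e₁))
        ≫ (((u ▷ MA.M) ≫ (α_ B A MA.M).hom ≫ (B ◁ (MA.e₂ ≫ g)) ≫ MB.e₂) ▷ B) ≫ mB
      = (α_ Z MA.M (A ⊗ B)).hom
        ≫ ((u ≫ (B ◁ g) ≫ MB.e₂) ▷ (MA.M ⊗ (A ⊗ B)))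
        ≫ (B ◁ ((α_ MA.M A B).inv ≫ ((MA.e₁ ≫ g) ▷ B) ≫ MB.e₁)) ≫ mB := by
    intro Z u
    calc ((Z ⊗ MA.M) ◁ ((g ▷ B) ≫ MB.e₁))
          ≫ (((u ▷ MA.M) ≫ (α_ B A MA.M).hom ≫ (B ◁ (MA.e₂ ≫ g)) ≫ MB.e₂) ▷ B) ≫ mB
        = ((Z ⊗ MA.M) ◁ ((g ▷ B) ≫ MB.e₁)) ≫ ((u ▷ MA.M) ▷ B)
            ≫ (((α_ B A MA.M).hom ≫ (B ◁ (MA.e₂ ≫ g)) ≫ MB.e₂) ▷ B) ≫ mB := by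
          rw [comp_whiskerRight]; simp only [assoc]
      _ = ((u ▷ MA.M) ▷ (A ⊗ B)) ≫ (((B ⊗ A) ⊗ MA.M) ◁ ((g ▷ B) ≫ MB.e₁))
            ≫ (((α_ B A MA.M).hom ≫ (B ◁ (MA.e₂ ≫ g)) ≫ MB.e₂) ▷ B) ≫ mB := by
          rw [whisker_exchange_assoc]
      _ = ((u ▷ MA.M) ▷ (A ⊗ B)) ≫ (α_ (B ⊗ A) MA.M (A ⊗ B)).hom
            ≫ (((B ◁ g) ≫ MB.e₂) ▷ (MA.M ⊗ (A ⊗ B)))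
            ≫ (B ◁ ((α_ MA.M A B).inv ≫ ((MA.e₁ ≫ g) ▷ B) ≫ MB.e₁)) ≫ mB := by
          rw [C2']
      _ = (α_ Z MA.M (A ⊗ B)).hom ≫ (u ▷ (MA.M ⊗ (A ⊗ B)))
            ≫ (((B ◁ g) ≫ MB.e₂) ▷ (MA.M ⊗ (A ⊗ B)))
            ≫ (B ◁ ((α_ MA.M A B).inv ≫ ((MA.e₁ ≫ g) ▷ B) ≫ MB.e₁)) ≫ mB := by
          rw [associator_naturality_left_assoc]
      _ = (α_ Z MA.M (A ⊗ B)).hom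
            ≫ ((u ≫ (B ◁ g) ≫ MB.e₂) ▷ (MA.M ⊗ (A ⊗ B)))
            ≫ (B ◁ ((α_ MA.M A B).inv ≫ ((MA.e₁ ≫ g) ▷ B) ≫ MB.e₁)) ≫ mB := by
          rw [← comp_whiskerRight_assoc]
  obtain ⟨G₂, hG₂⟩ : ∃ G₂ : B ⊗ MA.M ⟶ B, (((B ◁ g) ≫ MB.e₂) ▷ MA.M) ≫ G₂
      = (α_ B A MA.M).hom ≫ (B ◁ (MA.e₂ ≫ g)) ≫ MB.e₂ := by
    apply QD.factor_wr _ hgd₂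
    intro Z u v huv
    apply ndR
    haveI := QD.epi_wl hgd₁ (Z ⊗ MA.M)
    rw [← cancel_epi ((Z ⊗ MA.M) ◁ ((g ▷ B) ≫ MB.e₁))]
    rw [HH₂ u, HH₂ v, huv]
  -- (G₁, G₂) is an M-morphism
  have C3 : IsMMor mB G₁ G₂ := by
    show (G₂ ▷ B) ≫ mB = (α_ B MA.M B).hom ≫ (B ◁ G₁) ≫ mB
    haveI e1 : Epi ((((B ◁ g) ≫ MB.e₂) ▷ MA.M) ▷ B) := QD.epi_wr (QD.wr hgd₂) B
    haveI e2 : Epi ((((B ⊗ A) ⊗ MA.M)) ◁ ((g ▷ B) ≫ MB.e₁)) := QD.epi_wl hgd₁ _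
    rw [← cancel_epi ((((B ◁ g) ≫ MB.e₂) ▷ MA.M) ▷ B),
      ← cancel_epi ((((B ⊗ A) ⊗ MA.M)) ◁ ((g ▷ B) ≫ MB.e₁))]
    calc (((B ⊗ A) ⊗ MA.M) ◁ ((g ▷ B) ≫ MB.e₁))
          ≫ ((((B ◁ g) ≫ MB.e₂) ▷ MA.M) ▷ B) ≫ (G₂ ▷ B) ≫ mB
        = (((B ⊗ A) ⊗ MA.M) ◁ ((g ▷ B) ≫ MB.e₁))
            ≫ (((((B ◁ g) ≫ MB.e₂) ▷ MA.M) ≫ G₂) ▷ B) ≫ mB := by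
          rw [← comp_whiskerRight_assoc]
      _ = (((B ⊗ A) ⊗ MA.M) ◁ ((g ▷ B) ≫ MB.e₁))
            ≫ (((α_ B A MA.M).hom ≫ (B ◁ (MA.e₂ ≫ g)) ≫ MB.e₂) ▷ B) ≫ mB := by
          rw [hG₂]
      _ = (α_ (B ⊗ A) MA.M (A ⊗ B)).hom
            ≫ (((B ◁ g) ≫ MB.e₂) ▷ (MA.M ⊗ (A ⊗ B)))
            ≫ (B ◁ ((α_ MA.M A B).inv ≫ ((MA.e₁ ≫ g) ▷ B) ≫ MB.e₁)) ≫ mB := C2'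
      _ = (α_ (B ⊗ A) MA.M (A ⊗ B)).hom
            ≫ (((B ◁ g) ≫ MB.e₂) ▷ (MA.M ⊗ (A ⊗ B)))
            ≫ (B ◁ ((MA.M ◁ ((g ▷ B) ≫ MB.e₁)) ≫ G₁)) ≫ mB := by rw [hG₁]
      _ = (α_ (B ⊗ A) MA.M (A ⊗ B)).hom
            ≫ (((B ◁ g) ≫ MB.e₂) ▷ (MA.M ⊗ (A ⊗ B)))
            ≫ (B ◁ (MA.M ◁ ((g ▷ B) ≫ MB.e₁))) ≫ (B ◁ G₁) ≫ mB := by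
          rw [MonoidalCategory.whiskerLeft_comp B (MA.M ◁ ((g ▷ B) ≫ MB.e₁)) G₁]
          simp only [assoc]
      _ = (α_ (B ⊗ A) MA.M (A ⊗ B)).hom
            ≫ ((B ⊗ A) ◁ (MA.M ◁ ((g ▷ B) ≫ MB.e₁)))
            ≫ (((B ◁ g) ≫ MB.e₂) ▷ (MA.M ⊗ B)) ≫ (B ◁ G₁) ≫ mB := by
          rw [whisker_exchange_assoc]
      _ = (((B ⊗ A) ⊗ MA.M) ◁ ((g ▷ B) ≫ MB.e₁)) ≫ (α_ (B ⊗ A) MA.M B).hom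
            ≫ (((B ◁ g) ≫ MB.e₂) ▷ (MA.M ⊗ B)) ≫ (B ◁ G₁) ≫ mB := by
          rw [← associator_naturality_right_assoc]
      _ = (((B ⊗ A) ⊗ MA.M) ◁ ((g ▷ B) ≫ MB.e₁))
            ≫ ((((B ◁ g) ≫ MB.e₂) ▷ MA.M) ▷ B) ≫ (α_ B MA.M B).hom ≫ (B ◁ G₁) ≫ mB := by
          rw [← associator_naturality_left_assoc]
  -- G₂ is multiplicative over mMA
  have C5 : (B ◁ mMA) ≫ G₂ = (α_ B MA.M MA.M).inv ≫ (G₂ ▷ MA.M) ≫ G₂ := by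
    haveI := QD.epi_wr hgd₂ (MA.M ⊗ MA.M)
    have coh5 : (α_ B A (MA.M ⊗ MA.M)).hom ≫ (B ◁ (α_ A MA.M MA.M).inv)
        = (α_ (B ⊗ A) MA.M MA.M).inv ≫ ((α_ B A MA.M).hom ▷ MA.M)
          ≫ (α_ B (A ⊗ MA.M) MA.M).hom := by monoidal
    rw [← cancel_epi (((B ◁ g) ≫ MB.e₂) ▷ (MA.M ⊗ MA.M))]
    calc (((B ◁ g) ≫ MB.e₂) ▷ (MA.M ⊗ MA.M)) ≫ (B ◁ mMA) ≫ G₂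
        = ((B ⊗ A) ◁ mMA) ≫ (((B ◁ g) ≫ MB.e₂) ▷ MA.M) ≫ G₂ := by
          rw [← whisker_exchange_assoc]
      _ = ((B ⊗ A) ◁ mMA) ≫ (α_ B A MA.M).hom ≫ (B ◁ (MA.e₂ ≫ g)) ≫ MB.e₂ := by rw [hG₂]
      _ = (α_ B A (MA.M ⊗ MA.M)).hom ≫ (B ◁ (A ◁ mMA)) ≫ (B ◁ (MA.e₂ ≫ g)) ≫ MB.e₂ := by
          rw [associator_naturality_right_assoc]
      _ = (α_ B A (MA.M ⊗ MA.M)).hom ≫ (B ◁ ((A ◁ mMA) ≫ MA.e₂ ≫ g)) ≫ MB.e₂ := by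
          rw [← MonoidalCategory.whiskerLeft_comp_assoc]
      _ = (α_ B A (MA.M ⊗ MA.M)).hom
            ≫ (B ◁ ((α_ A MA.M MA.M).inv ≫ (MA.e₂ ▷ MA.M) ≫ MA.e₂ ≫ g)) ≫ MB.e₂ := by
          rw [reassoc_of% h2A]
      _ = (α_ B A (MA.M ⊗ MA.M)).hom ≫ (B ◁ (α_ A MA.M MA.M).inv)
            ≫ (B ◁ (MA.e₂ ▷ MA.M)) ≫ (B ◁ (MA.e₂ ≫ g)) ≫ MB.e₂ := by
          rw [MonoidalCategory.whiskerLeft_comp B (α_ A MA.M MA.M).inv]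
          rw [MonoidalCategory.whiskerLeft_comp B (MA.e₂ ▷ MA.M) (MA.e₂ ≫ g)]
          simp only [assoc]
      _ = (α_ (B ⊗ A) MA.M MA.M).inv ≫ ((α_ B A MA.M).hom ▷ MA.M)
            ≫ (α_ B (A ⊗ MA.M) MA.M).hom
            ≫ (B ◁ (MA.e₂ ▷ MA.M)) ≫ (B ◁ (MA.e₂ ≫ g)) ≫ MB.e₂ := by
          rw [reassoc_of% coh5]
      _ = (α_ (B ⊗ A) MA.M MA.M).inv ≫ ((α_ B A MA.M).hom ▷ MA.M)
            ≫ ((B ◁ MA.e₂) ▷ MA.M)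
            ≫ (α_ B A MA.M).hom ≫ (B ◁ (MA.e₂ ≫ g)) ≫ MB.e₂ := by
          rw [← associator_naturality_middle_assoc]
      _ = (α_ (B ⊗ A) MA.M MA.M).inv ≫ ((α_ B A MA.M).hom ▷ MA.M)
            ≫ ((B ◁ MA.e₂) ▷ MA.M)
            ≫ (((B ◁ g) ≫ MB.e₂) ▷ MA.M) ≫ G₂ := by rw [← hG₂]
      _ = (α_ (B ⊗ A) MA.M MA.M).inv
            ≫ ((((α_ B A MA.M).hom ≫ (B ◁ MA.e₂) ≫ (B ◁ g) ≫ MB.e₂) ▷ MA.M)) ≫ G₂ := by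
          simp only [comp_whiskerRight, assoc]
      _ = (α_ (B ⊗ A) MA.M MA.M).inv ≫ (((α_ B A MA.M).hom
            ≫ (B ◁ (MA.e₂ ≫ g)) ≫ MB.e₂) ▷ MA.M) ≫ G₂ := by
          rw [MonoidalCategory.whiskerLeft_comp B MA.e₂ g]; simp only [assoc]
      _ = (α_ (B ⊗ A) MA.M MA.M).inv
            ≫ (((((B ◁ g) ≫ MB.e₂) ▷ MA.M) ≫ G₂) ▷ MA.M) ≫ G₂ := by rw [← hG₂]
      _ = (α_ (B ⊗ A) MA.M MA.M).inv ≫ ((((B ◁ g) ≫ MB.e₂) ▷ MA.M) ▷ MA.M)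
            ≫ (G₂ ▷ MA.M) ≫ G₂ := by
          simp only [comp_whiskerRight, assoc]
      _ = (((B ◁ g) ≫ MB.e₂) ▷ (MA.M ⊗ MA.M)) ≫ (α_ B MA.M MA.M).inv ≫ (G₂ ▷ MA.M) ≫ G₂ := by
          rw [← associator_inv_naturality_left_assoc]
  have huA2' : (A ◁ uA) ≫ MA.e₂ = (ρ_ A).hom := by
    rw [← cancel_epi (ρ_ A).inv, huA2]; simp
  have huB2' : (B ◁ uB) ≫ MB.e₂ = (ρ_ B).hom := by
    rw [← cancel_epi (ρ_ B).inv, huB2]; simp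
  -- unit compatibility of G₂
  have unit₂ : (B ◁ uA) ≫ G₂ = (ρ_ B).hom := by
    haveI := QD.epi_wr hgd₂ (𝟙_ C)
    have cohu : (α_ B A (𝟙_ C)).hom ≫ (B ◁ (ρ_ A).hom) = (ρ_ (B ⊗ A)).hom := by monoidal
    rw [← cancel_epi (((B ◁ g) ≫ MB.e₂) ▷ (𝟙_ C))]
    calc (((B ◁ g) ≫ MB.e₂) ▷ (𝟙_ C)) ≫ (B ◁ uA) ≫ G₂
        = ((B ⊗ A) ◁ uA) ≫ (((B ◁ g) ≫ MB.e₂) ▷ MA.M) ≫ G₂ := by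
          rw [← whisker_exchange_assoc]
      _ = ((B ⊗ A) ◁ uA) ≫ (α_ B A MA.M).hom ≫ (B ◁ (MA.e₂ ≫ g)) ≫ MB.e₂ := by rw [hG₂]
      _ = (α_ B A (𝟙_ C)).hom ≫ (B ◁ (A ◁ uA)) ≫ (B ◁ (MA.e₂ ≫ g)) ≫ MB.e₂ := by
          rw [associator_naturality_right_assoc]
      _ = (α_ B A (𝟙_ C)).hom ≫ (B ◁ ((A ◁ uA) ≫ MA.e₂ ≫ g)) ≫ MB.e₂ := by
          rw [← MonoidalCategory.whiskerLeft_comp_assoc]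
      _ = (α_ B A (𝟙_ C)).hom ≫ (B ◁ ((ρ_ A).hom ≫ g)) ≫ MB.e₂ := by
          rw [reassoc_of% huA2']
      _ = (α_ B A (𝟙_ C)).hom ≫ (B ◁ (ρ_ A).hom) ≫ (B ◁ g) ≫ MB.e₂ := by
          rw [MonoidalCategory.whiskerLeft_comp B (ρ_ A).hom g]; simp only [assoc]
      _ = (ρ_ (B ⊗ A)).hom ≫ (B ◁ g) ≫ MB.e₂ := by rw [reassoc_of% cohu]
      _ = (((B ◁ g) ≫ MB.e₂) ▷ (𝟙_ C)) ≫ (ρ_ B).hom := by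
          rw [← rightUnitor_naturality]
  -- i-compatibility of G₂
  have i₂ : (B ◁ i) ≫ G₂ = (B ◁ g) ≫ MB.e₂ := by
    haveI := QD.epi_wr hgd₂ A
    rw [← cancel_epi (((B ◁ g) ≫ MB.e₂) ▷ A)]
    calc (((B ◁ g) ≫ MB.e₂) ▷ A) ≫ (B ◁ i) ≫ G₂
        = ((B ⊗ A) ◁ i) ≫ (((B ◁ g) ≫ MB.e₂) ▷ MA.M) ≫ G₂ := by
          rw [← whisker_exchange_assoc]
      _ = ((B ⊗ A) ◁ i) ≫ (α_ B A MA.M).hom ≫ (B ◁ (MA.e₂ ≫ g)) ≫ MB.e₂ := by rw [hG₂]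
      _ = (α_ B A A).hom ≫ (B ◁ (A ◁ i)) ≫ (B ◁ (MA.e₂ ≫ g)) ≫ MB.e₂ := by
          rw [associator_naturality_right_assoc]
      _ = (α_ B A A).hom ≫ (B ◁ ((A ◁ i) ≫ MA.e₂ ≫ g)) ≫ MB.e₂ := by
          rw [← MonoidalCategory.whiskerLeft_comp_assoc]
      _ = (α_ B A A).hom ≫ (B ◁ (mA ≫ g)) ≫ MB.e₂ := by
          rw [reassoc_of% hi₂.symm]
      _ = (α_ B A A).hom ≫ (B ◁ mA) ≫ (B ◁ g) ≫ MB.e₂ := by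
          rw [MonoidalCategory.whiskerLeft_comp B mA g]; simp only [assoc]
      _ = (((B ◁ g) ≫ MB.e₂) ▷ A) ≫ (B ◁ g) ≫ MB.e₂ := hgm₂
  -- the extension t
  obtain ⟨t, ⟨ht₁, ht₂⟩, -⟩ := MB.lift G₁ G₂ C3
  have P1 : mMA ≫ t = (t ⊗ₘ t) ≫ mMB := by
    apply extB2
    calc (B ◁ (mMA ≫ t)) ≫ MB.e₂
        = (B ◁ mMA) ≫ (B ◁ t) ≫ MB.e₂ := by
          rw [MonoidalCategory.whiskerLeft_comp B mMA t]; simp only [assoc]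
      _ = (B ◁ mMA) ≫ G₂ := by rw [← ht₂]
      _ = (α_ B MA.M MA.M).inv ≫ (G₂ ▷ MA.M) ≫ G₂ := C5
      _ = (α_ B MA.M MA.M).inv ≫ (((B ◁ t) ≫ MB.e₂) ▷ MA.M) ≫ (B ◁ t) ≫ MB.e₂ := by
          rw [← ht₂]
      _ = (B ◁ ((t ⊗ₘ t) ≫ mMB)) ≫ MB.e₂ := (S1 t t).symm
  have P2 : uA ≫ t = uB := by
    apply extB2
    calc (B ◁ (uA ≫ t)) ≫ MB.e₂
        = (B ◁ uA) ≫ (B ◁ t) ≫ MB.e₂ := by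
          rw [MonoidalCategory.whiskerLeft_comp B uA t]; simp only [assoc]
      _ = (B ◁ uA) ≫ G₂ := by rw [← ht₂]
      _ = (ρ_ B).hom := unit₂
      _ = (B ◁ uB) ≫ MB.e₂ := huB2'.symm
  have P3 : i ≫ t = g := by
    apply extB2
    calc (B ◁ (i ≫ t)) ≫ MB.e₂
        = (B ◁ i) ≫ (B ◁ t) ≫ MB.e₂ := by
          rw [MonoidalCategory.whiskerLeft_comp B i t]; simp only [assoc]
      _ = (B ◁ i) ≫ G₂ := by rw [← ht₂]
      _ = (B ◁ g) ≫ MB.e₂ := i₂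
  refine ⟨t, ⟨P1, P2, P3⟩, ?_⟩
  -- MA-versions of the product splitting lemmas
  have hA' : (mA ▷ A) ≫ mA = (α_ A A A).hom ≫ (A ◁ mA) ≫ mA := hA
  have S1A : ∀ {X Y : C} (x : X ⟶ MA.M) (y : Y ⟶ MA.M),
      (A ◁ ((x ⊗ₘ y) ≫ mMA)) ≫ MA.e₂
        = (α_ A X Y).inv ≫ (((A ◁ x) ≫ MA.e₂) ▷ Y) ≫ (A ◁ y) ≫ MA.e₂ := by
    intro X Y x y
    calc (A ◁ ((x ⊗ₘ y) ≫ mMA)) ≫ MA.e₂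
        = (A ◁ (x ▷ Y)) ≫ (A ◁ (MA.M ◁ y)) ≫ (A ◁ mMA) ≫ MA.e₂ := by
          rw [MonoidalCategory.tensorHom_def]; simp
      _ = (A ◁ (x ▷ Y)) ≫ (A ◁ (MA.M ◁ y)) ≫ (α_ A MA.M MA.M).inv ≫ (MA.e₂ ▷ MA.M) ≫ MA.e₂ := by
          rw [h2A]
      _ = (A ◁ (x ▷ Y)) ≫ (α_ A MA.M Y).inv ≫ ((A ⊗ MA.M) ◁ y) ≫ (MA.e₂ ▷ MA.M) ≫ MA.e₂ := by
          rw [associator_inv_naturality_right_assoc]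
      _ = (A ◁ (x ▷ Y)) ≫ (α_ A MA.M Y).inv ≫ (MA.e₂ ▷ Y) ≫ (A ◁ y) ≫ MA.e₂ := by
          rw [whisker_exchange_assoc]
      _ = (α_ A X Y).inv ≫ ((A ◁ x) ▷ Y) ≫ (MA.e₂ ▷ Y) ≫ (A ◁ y) ≫ MA.e₂ := by
          rw [associator_inv_naturality_middle_assoc]
      _ = (α_ A X Y).inv ≫ (((A ◁ x) ≫ MA.e₂) ▷ Y) ≫ (A ◁ y) ≫ MA.e₂ := by
          rw [← comp_whiskerRight_assoc]
  have S1RA : ∀ {X Y : C} (x : X ⟶ MA.M) (y : Y ⟶ MA.M),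
      (((x ⊗ₘ y) ≫ mMA) ▷ A) ≫ MA.e₁
        = (α_ X Y A).hom ≫ (X ◁ ((y ▷ A) ≫ MA.e₁)) ≫ (x ▷ A) ≫ MA.e₁ := by
    intro X Y x y
    calc (((x ⊗ₘ y) ≫ mMA) ▷ A) ≫ MA.e₁
        = ((X ◁ y) ▷ A) ≫ ((x ▷ MA.M) ▷ A) ≫ (mMA ▷ A) ≫ MA.e₁ := by
          rw [tensorHom_def']; simp
      _ = ((X ◁ y) ▷ A) ≫ ((x ▷ MA.M) ▷ A) ≫ (α_ MA.M MA.M A).hom ≫ (MA.M ◁ MA.e₁) ≫ MA.e₁ := by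
          rw [h1A]
      _ = ((X ◁ y) ▷ A) ≫ (α_ X MA.M A).hom ≫ (x ▷ (MA.M ⊗ A)) ≫ (MA.M ◁ MA.e₁) ≫ MA.e₁ := by
          rw [associator_naturality_left_assoc]
      _ = ((X ◁ y) ▷ A) ≫ (α_ X MA.M A).hom ≫ (X ◁ MA.e₁) ≫ (x ▷ A) ≫ MA.e₁ := by
          rw [← whisker_exchange_assoc]
      _ = (α_ X Y A).hom ≫ (X ◁ (y ▷ A)) ≫ (X ◁ MA.e₁) ≫ (x ▷ A) ≫ MA.e₁ := by
          rw [associator_naturality_middle_assoc]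
      _ = (α_ X Y A).hom ≫ (X ◁ ((y ▷ A) ≫ MA.e₁)) ≫ (x ▷ A) ≫ MA.e₁ := by
          rw [← MonoidalCategory.whiskerLeft_comp_assoc]
  -- first components of (‡)
  have Fp : (((i ▷ MA.M) ≫ mMA) ▷ A) ≫ MA.e₁ = ((MA.e₂ ≫ i) ▷ A) ≫ MA.e₁ := by
    calc (((i ▷ MA.M) ≫ mMA) ▷ A) ≫ MA.e₁
        = ((i ▷ MA.M) ▷ A) ≫ (mMA ▷ A) ≫ MA.e₁ := by
          simp only [comp_whiskerRight, assoc]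
      _ = ((i ▷ MA.M) ▷ A) ≫ (α_ MA.M MA.M A).hom ≫ (MA.M ◁ MA.e₁) ≫ MA.e₁ := by rw [h1A]
      _ = (α_ A MA.M A).hom ≫ (i ▷ (MA.M ⊗ A)) ≫ (MA.M ◁ MA.e₁) ≫ MA.e₁ := by
          rw [associator_naturality_left_assoc]
      _ = (α_ A MA.M A).hom ≫ (A ◁ MA.e₁) ≫ (i ▷ A) ≫ MA.e₁ := by
          rw [← whisker_exchange_assoc]
      _ = (α_ A MA.M A).hom ≫ (A ◁ MA.e₁) ≫ mA := by rw [← hi₁]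
      _ = (MA.e₂ ▷ A) ≫ mA := cA'.symm
      _ = (MA.e₂ ▷ A) ≫ (i ▷ A) ≫ MA.e₁ := by rw [← hi₁]
      _ = ((MA.e₂ ≫ i) ▷ A) ≫ MA.e₁ := by rw [← comp_whiskerRight_assoc]
  -- second components of (‡), after right multiplication
  have sub1 : (A ◁ ((i ▷ MA.M) ≫ mMA)) ≫ MA.e₂
      = (α_ A A MA.M).inv ≫ (mA ▷ MA.M) ≫ MA.e₂ := by
    calc (A ◁ ((i ▷ MA.M) ≫ mMA)) ≫ MA.e₂
        = (A ◁ (i ▷ MA.M)) ≫ (A ◁ mMA) ≫ MA.e₂ := by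
          rw [MonoidalCategory.whiskerLeft_comp A (i ▷ MA.M) mMA]; simp only [assoc]
      _ = (A ◁ (i ▷ MA.M)) ≫ (α_ A MA.M MA.M).inv ≫ (MA.e₂ ▷ MA.M) ≫ MA.e₂ := by rw [h2A]
      _ = (α_ A A MA.M).inv ≫ ((A ◁ i) ▷ MA.M) ≫ (MA.e₂ ▷ MA.M) ≫ MA.e₂ := by
          rw [associator_inv_naturality_middle_assoc]
      _ = (α_ A A MA.M).inv ≫ (((A ◁ i) ≫ MA.e₂) ▷ MA.M) ≫ MA.e₂ := by
          rw [← comp_whiskerRight_assoc]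
      _ = (α_ A A MA.M).inv ≫ (mA ▷ MA.M) ≫ MA.e₂ := by rw [← hi₂]
  have Gp : (((A ◁ ((i ▷ MA.M) ≫ mMA)) ≫ MA.e₂) ▷ A) ≫ mA
      = (((A ◁ (MA.e₂ ≫ i)) ≫ MA.e₂) ▷ A) ≫ mA := by
    have cohG : ((α_ A A MA.M).inv ▷ A) ≫ (α_ (A ⊗ A) MA.M A).hom ≫ (α_ A A (MA.M ⊗ A)).hom
        = (α_ A (A ⊗ MA.M) A).hom ≫ (A ◁ (α_ A MA.M A).hom) := by monoidal
    have GpL : (((A ◁ ((i ▷ MA.M) ≫ mMA)) ≫ MA.e₂) ▷ A) ≫ mA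
        = (α_ A (A ⊗ MA.M) A).hom ≫ (A ◁ (α_ A MA.M A).hom)
          ≫ (A ◁ (A ◁ MA.e₁)) ≫ (A ◁ mA) ≫ mA := by
      calc (((A ◁ ((i ▷ MA.M) ≫ mMA)) ≫ MA.e₂) ▷ A) ≫ mA
          = (((α_ A A MA.M).inv ≫ (mA ▷ MA.M) ≫ MA.e₂) ▷ A) ≫ mA := by rw [sub1]
        _ = ((α_ A A MA.M).inv ▷ A) ≫ ((mA ▷ MA.M) ▷ A) ≫ (MA.e₂ ▷ A) ≫ mA := by
            simp only [comp_whiskerRight, assoc]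
        _ = ((α_ A A MA.M).inv ▷ A) ≫ ((mA ▷ MA.M) ▷ A)
            ≫ (α_ A MA.M A).hom ≫ (A ◁ MA.e₁) ≫ mA := by rw [cA']
        _ = ((α_ A A MA.M).inv ▷ A) ≫ (α_ (A ⊗ A) MA.M A).hom
            ≫ (mA ▷ (MA.M ⊗ A)) ≫ (A ◁ MA.e₁) ≫ mA := by
            rw [associator_naturality_left_assoc]
        _ = ((α_ A A MA.M).inv ▷ A) ≫ (α_ (A ⊗ A) MA.M A).hom
            ≫ ((A ⊗ A) ◁ MA.e₁) ≫ (mA ▷ A) ≫ mA := by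
            rw [← whisker_exchange_assoc]
        _ = ((α_ A A MA.M).inv ▷ A) ≫ (α_ (A ⊗ A) MA.M A).hom
            ≫ ((A ⊗ A) ◁ MA.e₁) ≫ (α_ A A A).hom ≫ (A ◁ mA) ≫ mA := by rw [hA']
        _ = ((α_ A A MA.M).inv ▷ A) ≫ (α_ (A ⊗ A) MA.M A).hom
            ≫ (α_ A A (MA.M ⊗ A)).hom ≫ (A ◁ (A ◁ MA.e₁)) ≫ (A ◁ mA) ≫ mA := by
            rw [associator_naturality_right_assoc]
        _ = (α_ A (A ⊗ MA.M) A).hom ≫ (A ◁ (α_ A MA.M A).hom)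
            ≫ (A ◁ (A ◁ MA.e₁)) ≫ (A ◁ mA) ≫ mA := by rw [reassoc_of% cohG]
    have GpR : (((A ◁ (MA.e₂ ≫ i)) ≫ MA.e₂) ▷ A) ≫ mA
        = (α_ A (A ⊗ MA.M) A).hom ≫ (A ◁ (α_ A MA.M A).hom)
          ≫ (A ◁ (A ◁ MA.e₁)) ≫ (A ◁ mA) ≫ mA := by
      calc (((A ◁ (MA.e₂ ≫ i)) ≫ MA.e₂) ▷ A) ≫ mA
          = (((A ◁ MA.e₂) ≫ (A ◁ i) ≫ MA.e₂) ▷ A) ≫ mA := by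
            rw [MonoidalCategory.whiskerLeft_comp A MA.e₂ i]; simp only [assoc]
        _ = (((A ◁ MA.e₂) ≫ mA) ▷ A) ≫ mA := by rw [← hi₂]
        _ = ((A ◁ MA.e₂) ▷ A) ≫ (mA ▷ A) ≫ mA := by simp only [comp_whiskerRight, assoc]
        _ = ((A ◁ MA.e₂) ▷ A) ≫ (α_ A A A).hom ≫ (A ◁ mA) ≫ mA := by rw [hA']
        _ = (α_ A (A ⊗ MA.M) A).hom ≫ (A ◁ (MA.e₂ ▷ A)) ≫ (A ◁ mA) ≫ mA := by
            rw [associator_naturality_middle_assoc]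
        _ = (α_ A (A ⊗ MA.M) A).hom ≫ (A ◁ ((MA.e₂ ▷ A) ≫ mA)) ≫ mA := by
            rw [← MonoidalCategory.whiskerLeft_comp_assoc]
        _ = (α_ A (A ⊗ MA.M) A).hom
            ≫ (A ◁ ((α_ A MA.M A).hom ≫ (A ◁ MA.e₁) ≫ mA)) ≫ mA := by rw [cA']
        _ = (α_ A (A ⊗ MA.M) A).hom ≫ (A ◁ (α_ A MA.M A).hom)
            ≫ (A ◁ (A ◁ MA.e₁)) ≫ (A ◁ mA) ≫ mA := by
            simp only [MonoidalCategory.whiskerLeft_comp, assoc]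
    exact GpL.trans GpR.symm
  -- the identity (‡)
  have ddag : (((i ▷ MA.M) ≫ mMA) ⊗ₘ i) ≫ mMA = ((MA.e₂ ≫ i) ⊗ₘ i) ≫ mMA := by
    apply extA
    · rw [S1RA _ i, S1RA _ i, Fp]
    · rw [S1A _ i, S1A _ i, ← hi₂, Gp]
  have S3 : ∀ {X Y : C} (x : X ⟶ MB.M) (y : Y ⟶ MB.M),
      (((B ◁ x) ≫ MB.e₂) ▷ Y) ≫ (B ◁ y) ≫ MB.e₂
        = (α_ B X Y).hom ≫ (B ◁ ((x ⊗ₘ y) ≫ mMB)) ≫ MB.e₂ := by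
    intro X Y x y; rw [S1 x y]; simp
  have cohE : (α_ B A (MA.M ⊗ A)).hom ≫ (B ◁ (α_ A MA.M A).inv)
      = (α_ (B ⊗ A) MA.M A).inv ≫ ((α_ B A MA.M).hom ▷ A) ≫ (α_ B (A ⊗ MA.M) A).hom := by
    monoidal
  have Es : ∀ (s : MA.M ⟶ MB.M), mMA ≫ s = (s ⊗ₘ s) ≫ mMB → i ≫ s = g →
      (s ⊗ₘ g) ≫ mMB = MA.e₁ ≫ g := by
    intro s hsm hsi
    have comm : ∀ {X Y : C} (a : X ⟶ MA.M) (b : Y ⟶ MA.M),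
        ((a ≫ s) ⊗ₘ (b ≫ s)) ≫ mMB = ((a ⊗ₘ b) ≫ mMA) ≫ s := by
      intro X Y a b; rw [← tensorHom_comp_tensorHom]; simp only [assoc]; rw [hsm]
    have hd : (i ▷ MA.M) ≫ (s ⊗ₘ s) = (i ≫ s) ⊗ₘ s := by
      rw [← tensorHom_id, tensorHom_comp_tensorHom, id_comp]
    have hgs : (g ⊗ₘ s) ≫ mMB = ((i ▷ MA.M) ≫ mMA) ≫ s := by
      rw [← hsi, ← hd]; simp only [assoc]; rw [hsm]
    have key2 : (((g ⊗ₘ s) ≫ mMB) ⊗ₘ g) ≫ mMB = ((MA.e₂ ≫ g) ⊗ₘ g) ≫ mMB := by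
      calc (((g ⊗ₘ s) ≫ mMB) ⊗ₘ g) ≫ mMB
          = ((((i ▷ MA.M) ≫ mMA) ≫ s) ⊗ₘ (i ≫ s)) ≫ mMB := by rw [hgs, ← hsi]
        _ = ((((i ▷ MA.M) ≫ mMA) ⊗ₘ i) ≫ mMA) ≫ s := comm _ _
        _ = (((MA.e₂ ≫ i) ⊗ₘ i) ≫ mMA) ≫ s := by rw [ddag]
        _ = (((MA.e₂ ≫ i) ≫ s) ⊗ₘ (i ≫ s)) ≫ mMB := (comm _ _).symm
        _ = ((MA.e₂ ≫ g) ⊗ₘ g) ≫ mMB := by rw [assoc, hsi]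
    apply extB2
    rw [S1 s g]
    haveI := QD.epi_wr hgd₂ (MA.M ⊗ A)
    rw [← cancel_epi (((B ◁ g) ≫ MB.e₂) ▷ (MA.M ⊗ A))]
    calc (((B ◁ g) ≫ MB.e₂) ▷ (MA.M ⊗ A)) ≫ (α_ B MA.M A).inv
          ≫ (((B ◁ s) ≫ MB.e₂) ▷ A) ≫ (B ◁ g) ≫ MB.e₂
        = (α_ (B ⊗ A) MA.M A).inv ≫ ((((B ◁ g) ≫ MB.e₂) ▷ MA.M) ▷ A)
            ≫ (((B ◁ s) ≫ MB.e₂) ▷ A) ≫ (B ◁ g) ≫ MB.e₂ := by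
          rw [associator_inv_naturality_left_assoc]
      _ = (α_ (B ⊗ A) MA.M A).inv
            ≫ (((((B ◁ g) ≫ MB.e₂) ▷ MA.M) ≫ (B ◁ s) ≫ MB.e₂) ▷ A) ≫ (B ◁ g) ≫ MB.e₂ := by
          rw [← comp_whiskerRight_assoc]
      _ = (α_ (B ⊗ A) MA.M A).inv
            ≫ (((α_ B A MA.M).hom ≫ (B ◁ ((g ⊗ₘ s) ≫ mMB)) ≫ MB.e₂) ▷ A) ≫ (B ◁ g) ≫ MB.e₂ := by
          rw [S3 g s]
      _ = (α_ (B ⊗ A) MA.M A).inv ≫ ((α_ B A MA.M).hom ▷ A)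
            ≫ (((B ◁ ((g ⊗ₘ s) ≫ mMB)) ≫ MB.e₂) ▷ A) ≫ (B ◁ g) ≫ MB.e₂ := by
          simp only [comp_whiskerRight, assoc]
      _ = (α_ (B ⊗ A) MA.M A).inv ≫ ((α_ B A MA.M).hom ▷ A) ≫ (α_ B (A ⊗ MA.M) A).hom
            ≫ (B ◁ ((((g ⊗ₘ s) ≫ mMB) ⊗ₘ g) ≫ mMB)) ≫ MB.e₂ := by
          rw [S3 ((g ⊗ₘ s) ≫ mMB) g]
      _ = (α_ (B ⊗ A) MA.M A).inv ≫ ((α_ B A MA.M).hom ▷ A) ≫ (α_ B (A ⊗ MA.M) A).hom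
            ≫ (B ◁ (((MA.e₂ ≫ g) ⊗ₘ g) ≫ mMB)) ≫ MB.e₂ := by
          rw [key2]
      _ = (α_ B A (MA.M ⊗ A)).hom ≫ (B ◁ (α_ A MA.M A).inv)
            ≫ (B ◁ (((MA.e₂ ≫ g) ⊗ₘ g) ≫ mMB)) ≫ MB.e₂ := by
          rw [reassoc_of% cohE]
      _ = (α_ B A (MA.M ⊗ A)).hom
            ≫ (B ◁ ((α_ A MA.M A).inv ≫ ((MA.e₂ ≫ g) ⊗ₘ g) ≫ mMB)) ≫ MB.e₂ := by
          rw [← MonoidalCategory.whiskerLeft_comp_assoc]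
      _ = (((B ◁ g) ≫ MB.e₂) ▷ (MA.M ⊗ A)) ≫ (B ◁ (MA.e₁ ≫ g)) ≫ MB.e₂ := J.symm
  -- any monoid morphism extending g has first component G₁
  have uniqKey : ∀ (s : MA.M ⟶ MB.M), mMA ≫ s = (s ⊗ₘ s) ≫ mMB → i ≫ s = g →
      (s ▷ B) ≫ MB.e₁ = G₁ := by
    intro s hsm hsi
    haveI := QD.epi_wl hgd₁ MA.M
    rw [← cancel_epi (MA.M ◁ ((g ▷ B) ≫ MB.e₁)), hG₁]
    calc (MA.M ◁ ((g ▷ B) ≫ MB.e₁)) ≫ (s ▷ B) ≫ MB.e₁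
        = (α_ MA.M A B).inv ≫ (α_ MA.M A B).hom
            ≫ (MA.M ◁ ((g ▷ B) ≫ MB.e₁)) ≫ (s ▷ B) ≫ MB.e₁ := by simp
      _ = (α_ MA.M A B).inv ≫ (((s ⊗ₘ g) ≫ mMB) ▷ B) ≫ MB.e₁ := by rw [← S1R s g]
      _ = (α_ MA.M A B).inv ≫ ((MA.e₁ ≫ g) ▷ B) ≫ MB.e₁ := by rw [Es s hsm hsi]
  rintro s ⟨hsm, hsu, hsi⟩
  exact extB1 ((uniqKey s hsm hsi).trans (uniqKey t P1 P3).symm)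
end

section
/- There is a (non-full) subcategory D of the category of semigroups in C whose objects are the non-degenerate semigroups with multiplication in Q, and whose morphisms f : A → B are those semigroup morphisms for which the induced M-morphism f^# (with components m∘(f⊗1) and m∘(1⊗f)) has both components in Q; and the assignment f ↦ f^# is a faithful identity-on-objects functor D → M which is moreover full on isomorphisms: every isomorphism in M between objects of D is of the form f^# for a semigroup isomorphism f. -/
open CategoryTheory Category MonoidalCategory Limits

universe v u

variable {C : Type u} [Category.{v} C] [MonoidalCategory C]

/-- An object of the category `ℳ`: a non-degenerate semigroup with multiplication in `Q`. -/
structure MObj {C : Type u} [Category.{v} C] [MonoidalCategory C] (QD : QData C) where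
  A : C
  m : A ⊗ A ⟶ A
  assoc : SgAssoc A m
  nondeg : NonDeg A m
  mQ : QD.Q m

/-- A morphism of the category `ℳ`: a dense multiplicative `𝕄`-morphism. -/
@[ext]
structure MHom {C : Type u} [Category.{v} C] [MonoidalCategory C] {QD : QData C}
    (X Y : MObj QD) where
  f₁ : X.A ⊗ Y.A ⟶ Y.A
  f₂ : Y.A ⊗ X.A ⟶ Y.A
  compat : IsMMor Y.m f₁ f₂
  mult₁ : Mult₁ X.m f₁
  mult₂ : Mult₂ X.m f₂
  dense₁ : QD.Q f₁
  dense₂ : QD.Q f₂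

/-- The identity `𝕄`-morphism `i = (m, m)`. -/
def MObj.idM {QD : QData C} (X : MObj QD) : MHom X X where
  f₁ := X.m
  f₂ := X.m
  compat := X.assoc
  mult₁ := X.assoc
  mult₂ := X.assoc.symm
  dense₁ := X.mQ
  dense₂ := X.mQ

/-- The monoidal unit with its trivial multiplication, as an object of `ℳ`. -/
def MObj.unit (QD : QData C) : MObj QD where
  A := 𝟙_ C
  m := (λ_ (𝟙_ C)).hom
  assoc := by
    dsimp [SgAssoc]
    monoidal
  nondeg := by
    constructor
    · intro X Y f g h
      have h' : f ▷ 𝟙_ C = g ▷ 𝟙_ C := by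
        have this := h
        dsimp at this
        simp only [← Category.assoc] at this
        rw [cancel_mono] at this
        rwa [cancel_mono] at this
      rwa [MonoidalCategory.whiskerRight_id, MonoidalCategory.whiskerRight_id,
        cancel_epi, cancel_mono] at h'
    · intro X Y f g h
      have h' : 𝟙_ C ◁ f = 𝟙_ C ◁ g := by
        have this := h
        dsimp at this
        simp only [← Category.assoc] at this
        rw [cancel_mono] at this
        rwa [cancel_mono] at this
      rwa [MonoidalCategory.id_whiskerLeft, MonoidalCategory.id_whiskerLeft,
        cancel_epi, cancel_mono] at h'
  mQ := QD.iso_mem _ inferInstance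


/-! ### Auxiliary lemmas -/

section Aux

lemma nondeg_cancel_left {A : C} {m : A ⊗ A ⟶ A} (h : NonDeg A m) {Z : C} {p q : Z ⟶ A}
    (hpq : (A ◁ p) ≫ m = (A ◁ q) ≫ m) : p = q := by
  have key : ∀ r : Z ⟶ A, (A ◁ (r ≫ (ρ_ A).inv)) ≫ (α_ A A (𝟙_ C)).inv ≫ (m ▷ (𝟙_ C)) =
      ((A ◁ r) ≫ m) ≫ (ρ_ A).inv := by
    intro r
    have c1 : (A ◁ (ρ_ A).inv) ≫ (α_ A A (𝟙_ C)).inv = (ρ_ (A ⊗ A)).inv := by monoidal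
    rw [MonoidalCategory.whiskerLeft_comp, assoc, ← assoc (A ◁ (ρ_ A).inv), c1,
      ← rightUnitor_inv_naturality, assoc]
  have inj := h.2 Z (𝟙_ C)
  have := inj (a₁ := p ≫ (ρ_ A).inv) (a₂ := q ≫ (ρ_ A).inv) (by
    dsimp only
    rw [key p, key q, hpq])
  rwa [cancel_mono] at this

lemma nondeg_cancel_right {A : C} {m : A ⊗ A ⟶ A} (h : NonDeg A m) {Z : C} {p q : Z ⟶ A}
    (hpq : (p ▷ A) ≫ m = (q ▷ A) ≫ m) : p = q := by
  have key : ∀ r : Z ⟶ A, ((r ≫ (λ_ A).inv) ▷ A) ≫ (α_ (𝟙_ C) A A).hom ≫ ((𝟙_ C) ◁ m) =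
      ((r ▷ A) ≫ m) ≫ (λ_ A).inv := by
    intro r
    have c1 : ((λ_ A).inv ▷ A) ≫ (α_ (𝟙_ C) A A).hom = (λ_ (A ⊗ A)).inv := by monoidal
    rw [MonoidalCategory.comp_whiskerRight, assoc, ← assoc ((λ_ A).inv ▷ A), c1,
      ← leftUnitor_inv_naturality, assoc]
  have inj := h.1 Z (𝟙_ C)
  have := inj (a₁ := p ≫ (λ_ A).inv) (a₂ := q ≫ (λ_ A).inv) (by
    dsimp only
    rw [key p, key q, hpq])
  rwa [cancel_mono] at this

/-- Right `B`-linearity of the first component of an `𝕄`-morphism. -/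
lemma mmor_linR {A B : C} {m : B ⊗ B ⟶ B} (nd : NonDeg B m)
    (ya : (m ▷ B) ≫ m = (α_ B B B).hom ≫ (B ◁ m) ≫ m)
    {f₁ : A ⊗ B ⟶ B} {f₂ : B ⊗ A ⟶ B}
    (hc : (f₂ ▷ B) ≫ m = (α_ B A B).hom ≫ (B ◁ f₁) ≫ m) :
    (f₁ ▷ B) ≫ m = (α_ A B B).hom ≫ (A ◁ m) ≫ f₁ := by
  have hc' : (B ◁ f₁) ≫ m = (α_ B A B).inv ≫ (f₂ ▷ B) ≫ m := by
    rw [hc, Iso.inv_hom_id_assoc]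
  have ya' : (B ◁ m) ≫ m = (α_ B B B).inv ≫ (m ▷ B) ≫ m := by
    rw [ya, Iso.inv_hom_id_assoc]
  apply nondeg_cancel_left nd
  have coh : ((α_ B (A ⊗ B) B).inv ≫ ((α_ B A B).inv ▷ B)) ≫ (α_ (B ⊗ A) B B).hom =
      (B ◁ (α_ A B B).hom) ≫ (α_ B A (B ⊗ B)).inv := by monoidal
  calc (B ◁ ((f₁ ▷ B) ≫ m)) ≫ m
      = (B ◁ (f₁ ▷ B)) ≫ (B ◁ m) ≫ m := by
        rw [MonoidalCategory.whiskerLeft_comp, assoc]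
    _ = (B ◁ (f₁ ▷ B)) ≫ (α_ B B B).inv ≫ (m ▷ B) ≫ m := by rw [ya']
    _ = (α_ B (A ⊗ B) B).inv ≫ ((B ◁ f₁) ▷ B) ≫ (m ▷ B) ≫ m := by
        rw [associator_inv_naturality_middle_assoc]
    _ = (α_ B (A ⊗ B) B).inv ≫ (((B ◁ f₁) ≫ m) ▷ B) ≫ m := by
        rw [MonoidalCategory.comp_whiskerRight, assoc]
    _ = (α_ B (A ⊗ B) B).inv ≫ (((α_ B A B).inv ≫ (f₂ ▷ B) ≫ m) ▷ B) ≫ m := by rw [hc']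
    _ = (α_ B (A ⊗ B) B).inv ≫ ((α_ B A B).inv ▷ B) ≫ ((f₂ ▷ B) ▷ B) ≫ (m ▷ B) ≫ m := by
        simp only [MonoidalCategory.comp_whiskerRight, assoc]
    _ = (α_ B (A ⊗ B) B).inv ≫ ((α_ B A B).inv ▷ B) ≫ ((f₂ ▷ B) ▷ B) ≫ (α_ B B B).hom ≫
          (B ◁ m) ≫ m := by rw [ya]
    _ = (α_ B (A ⊗ B) B).inv ≫ ((α_ B A B).inv ▷ B) ≫ (α_ (B ⊗ A) B B).hom ≫
          (f₂ ▷ (B ⊗ B)) ≫ (B ◁ m) ≫ m := by rw [associator_naturality_left_assoc]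
    _ = (B ◁ (α_ A B B).hom) ≫ (α_ B A (B ⊗ B)).inv ≫ (f₂ ▷ (B ⊗ B)) ≫ (B ◁ m) ≫ m := by
        simp only [← assoc]
        rw [coh]
    _ = (B ◁ (α_ A B B).hom) ≫ (α_ B A (B ⊗ B)).inv ≫ ((B ⊗ A) ◁ m) ≫ (f₂ ▷ B) ≫ m := by
        rw [whisker_exchange_assoc]
    _ = (B ◁ (α_ A B B).hom) ≫ (B ◁ (A ◁ m)) ≫ (α_ B A B).inv ≫ (f₂ ▷ B) ≫ m := by
        rw [associator_inv_naturality_right_assoc]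
    _ = (B ◁ (α_ A B B).hom) ≫ (B ◁ (A ◁ m)) ≫ (B ◁ f₁) ≫ m := by rw [← hc']
    _ = (B ◁ ((α_ A B B).hom ≫ (A ◁ m) ≫ f₁)) ≫ m := by
        simp only [MonoidalCategory.whiskerLeft_comp, assoc]

lemma sharp_compat {A B : C} {n : B ⊗ B ⟶ B}
    (yn : (n ▷ B) ≫ n = (α_ B B B).hom ≫ (B ◁ n) ≫ n) (f : A ⟶ B) :
    (((B ◁ f) ≫ n) ▷ B) ≫ n = (α_ B A B).hom ≫ (B ◁ ((f ▷ B) ≫ n)) ≫ n := by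
  calc (((B ◁ f) ≫ n) ▷ B) ≫ n
      = ((B ◁ f) ▷ B) ≫ (n ▷ B) ≫ n := by
        rw [MonoidalCategory.comp_whiskerRight, assoc]
    _ = ((B ◁ f) ▷ B) ≫ (α_ B B B).hom ≫ (B ◁ n) ≫ n := by rw [yn]
    _ = (α_ B A B).hom ≫ (B ◁ (f ▷ B)) ≫ (B ◁ n) ≫ n := by
        rw [associator_naturality_middle_assoc]
    _ = (α_ B A B).hom ≫ (B ◁ ((f ▷ B) ≫ n)) ≫ n := by
        simp only [MonoidalCategory.whiskerLeft_comp, assoc]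

lemma sharp_mult₁ {A B : C} {m : A ⊗ A ⟶ A} {n : B ⊗ B ⟶ B}
    (yn : (n ▷ B) ≫ n = (α_ B B B).hom ≫ (B ◁ n) ≫ n) {f : A ⟶ B}
    (hf : (f ⊗ₘ f) ≫ n = m ≫ f) :
    (m ▷ B) ≫ ((f ▷ B) ≫ n) =
      (α_ A A B).hom ≫ (A ◁ ((f ▷ B) ≫ n)) ≫ ((f ▷ B) ≫ n) := by
  have nat : ((f ⊗ₘ f) ▷ B) ≫ (α_ B B B).hom = (α_ A A B).hom ≫ (f ⊗ₘ (f ▷ B)) := by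
    rw [← tensorHom_id (f ⊗ₘ f) B, associator_naturality f f (𝟙 B), tensorHom_id]
  calc (m ▷ B) ≫ ((f ▷ B) ≫ n)
      = ((m ≫ f) ▷ B) ≫ n := by rw [MonoidalCategory.comp_whiskerRight, assoc]
    _ = (((f ⊗ₘ f) ≫ n) ▷ B) ≫ n := by rw [hf]
    _ = ((f ⊗ₘ f) ▷ B) ≫ (n ▷ B) ≫ n := by rw [MonoidalCategory.comp_whiskerRight, assoc]
    _ = ((f ⊗ₘ f) ▷ B) ≫ (α_ B B B).hom ≫ (B ◁ n) ≫ n := by rw [yn]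
    _ = (α_ A A B).hom ≫ (f ⊗ₘ (f ▷ B)) ≫ (B ◁ n) ≫ n := by rw [reassoc_of% nat]
    _ = (α_ A A B).hom ≫ (A ◁ (f ▷ B)) ≫ (f ▷ (B ⊗ B)) ≫ (B ◁ n) ≫ n := by
        rw [tensorHom_def' f (f ▷ B), assoc]
    _ = (α_ A A B).hom ≫ (A ◁ (f ▷ B)) ≫ (A ◁ n) ≫ (f ▷ B) ≫ n := by
        rw [← whisker_exchange_assoc]
    _ = (α_ A A B).hom ≫ (A ◁ ((f ▷ B) ≫ n)) ≫ ((f ▷ B) ≫ n) := by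
        simp only [MonoidalCategory.whiskerLeft_comp, assoc]

lemma sharp_mult₂ {A B : C} {m : A ⊗ A ⟶ A} {n : B ⊗ B ⟶ B}
    (yn : (n ▷ B) ≫ n = (α_ B B B).hom ≫ (B ◁ n) ≫ n) {f : A ⟶ B}
    (hf : (f ⊗ₘ f) ≫ n = m ≫ f) :
    (α_ B A A).hom ≫ (B ◁ m) ≫ ((B ◁ f) ≫ n) =
      (((B ◁ f) ≫ n) ▷ A) ≫ ((B ◁ f) ≫ n) := by
  have nat : ((B ◁ f) ⊗ₘ f) ≫ (α_ B B B).hom = (α_ B A A).hom ≫ (B ◁ (f ⊗ₘ f)) := by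
    rw [← id_tensorHom B f, associator_naturality (𝟙 B) f f, id_tensorHom]
  calc (α_ B A A).hom ≫ (B ◁ m) ≫ ((B ◁ f) ≫ n)
      = (α_ B A A).hom ≫ (B ◁ (m ≫ f)) ≫ n := by
        simp only [MonoidalCategory.whiskerLeft_comp, assoc]
    _ = (α_ B A A).hom ≫ (B ◁ ((f ⊗ₘ f) ≫ n)) ≫ n := by rw [hf]
    _ = (α_ B A A).hom ≫ (B ◁ (f ⊗ₘ f)) ≫ (B ◁ n) ≫ n := by
        simp only [MonoidalCategory.whiskerLeft_comp, assoc]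
    _ = ((B ◁ f) ⊗ₘ f) ≫ (α_ B B B).hom ≫ (B ◁ n) ≫ n := by rw [reassoc_of% nat]
    _ = ((B ◁ f) ⊗ₘ f) ≫ (n ▷ B) ≫ n := by rw [yn]
    _ = ((B ◁ f) ▷ A) ≫ ((B ⊗ B) ◁ f) ≫ (n ▷ B) ≫ n := by
        rw [tensorHom_def (B ◁ f) f, assoc]
    _ = ((B ◁ f) ▷ A) ≫ (n ▷ A) ≫ (B ◁ f) ≫ n := by rw [whisker_exchange_assoc]
    _ = (((B ◁ f) ≫ n) ▷ A) ≫ ((B ◁ f) ≫ n) := by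
        simp only [MonoidalCategory.comp_whiskerRight, assoc]

lemma sharp_comp₁ {A B D : C} {n : B ⊗ B ⟶ B} {p : D ⊗ D ⟶ D}
    (zp : (p ▷ D) ≫ p = (α_ D D D).hom ≫ (D ◁ p) ≫ p)
    {f : A ⟶ B} {g : B ⟶ D}
    (hg : (g ⊗ₘ g) ≫ p = n ≫ g) :
    (α_ A B D).hom ≫ (A ◁ ((g ▷ D) ≫ p)) ≫ (((f ≫ g) ▷ D) ≫ p) =
      (((f ▷ B) ≫ n) ▷ D) ≫ ((g ▷ D) ≫ p) := by
  have nat : (((f ≫ g) ⊗ₘ g) ▷ D) ≫ (α_ D D D).hom =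
      (α_ A B D).hom ≫ ((f ≫ g) ⊗ₘ (g ▷ D)) := by
    rw [← tensorHom_id ((f ≫ g) ⊗ₘ g) D, associator_naturality (f ≫ g) g (𝟙 D), tensorHom_id]
  calc (α_ A B D).hom ≫ (A ◁ ((g ▷ D) ≫ p)) ≫ (((f ≫ g) ▷ D) ≫ p)
      = (α_ A B D).hom ≫ (A ◁ (g ▷ D)) ≫ (A ◁ p) ≫ ((f ≫ g) ▷ D) ≫ p := by
        simp only [MonoidalCategory.whiskerLeft_comp, assoc]
    _ = (α_ A B D).hom ≫ (A ◁ (g ▷ D)) ≫ ((f ≫ g) ▷ (D ⊗ D)) ≫ (D ◁ p) ≫ p := by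
        rw [whisker_exchange_assoc]
    _ = (α_ A B D).hom ≫ ((f ≫ g) ⊗ₘ (g ▷ D)) ≫ (D ◁ p) ≫ p := by
        rw [tensorHom_def' (f ≫ g) (g ▷ D), assoc]
    _ = (((f ≫ g) ⊗ₘ g) ▷ D) ≫ (α_ D D D).hom ≫ (D ◁ p) ≫ p := by rw [reassoc_of% nat]
    _ = (((f ≫ g) ⊗ₘ g) ▷ D) ≫ (p ▷ D) ≫ p := by rw [zp]
    _ = ((((f ≫ g) ⊗ₘ g) ≫ p) ▷ D) ≫ p := by rw [MonoidalCategory.comp_whiskerRight, assoc]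
    _ = (((f ▷ B) ≫ (g ⊗ₘ g) ≫ p) ▷ D) ≫ p := by
        rw [← tensorHom_id f B, ← assoc, tensorHom_comp_tensorHom, id_comp]
    _ = (((f ▷ B) ≫ n) ▷ D) ≫ ((g ▷ D) ≫ p) := by
        rw [hg]
        simp only [MonoidalCategory.comp_whiskerRight, assoc]

lemma sharp_comp₂ {A B D : C} {n : B ⊗ B ⟶ B} {p : D ⊗ D ⟶ D}
    (zp : (p ▷ D) ≫ p = (α_ D D D).hom ≫ (D ◁ p) ≫ p)
    {f : A ⟶ B} {g : B ⟶ D}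
    (hg : (g ⊗ₘ g) ≫ p = n ≫ g) :
    (((D ◁ g) ≫ p) ▷ A) ≫ ((D ◁ (f ≫ g)) ≫ p) =
      (α_ D B A).hom ≫ (D ◁ ((B ◁ f) ≫ n)) ≫ ((D ◁ g) ≫ p) := by
  have nat : ((D ◁ g) ⊗ₘ (f ≫ g)) ≫ (α_ D D D).hom =
      (α_ D B A).hom ≫ (D ◁ (g ⊗ₘ (f ≫ g))) := by
    rw [← id_tensorHom D g, associator_naturality (𝟙 D) g (f ≫ g), id_tensorHom]
  calc (((D ◁ g) ≫ p) ▷ A) ≫ ((D ◁ (f ≫ g)) ≫ p)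
      = ((D ◁ g) ▷ A) ≫ (p ▷ A) ≫ (D ◁ (f ≫ g)) ≫ p := by
        simp only [MonoidalCategory.comp_whiskerRight, assoc]
    _ = ((D ◁ g) ▷ A) ≫ ((D ⊗ D) ◁ (f ≫ g)) ≫ (p ▷ D) ≫ p := by
        rw [← whisker_exchange_assoc]
    _ = ((D ◁ g) ⊗ₘ (f ≫ g)) ≫ (p ▷ D) ≫ p := by
        rw [tensorHom_def (D ◁ g) (f ≫ g), assoc]
    _ = ((D ◁ g) ⊗ₘ (f ≫ g)) ≫ (α_ D D D).hom ≫ (D ◁ p) ≫ p := by rw [zp]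
    _ = (α_ D B A).hom ≫ (D ◁ (g ⊗ₘ (f ≫ g))) ≫ (D ◁ p) ≫ p := by rw [reassoc_of% nat]
    _ = (α_ D B A).hom ≫ (D ◁ ((g ⊗ₘ (f ≫ g)) ≫ p)) ≫ p := by
        simp only [MonoidalCategory.whiskerLeft_comp, assoc]
    _ = (α_ D B A).hom ≫ (D ◁ ((B ◁ f) ≫ (g ⊗ₘ g) ≫ p)) ≫ p := by
        rw [← id_tensorHom B f, ← assoc (𝟙 B ⊗ₘ f), tensorHom_comp_tensorHom, id_comp]
    _ = (α_ D B A).hom ≫ (D ◁ ((B ◁ f) ≫ n)) ≫ ((D ◁ g) ≫ p) := by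
        rw [hg]
        simp only [MonoidalCategory.whiskerLeft_comp, assoc]

lemma QData.epiOfQ (QD : QData C) {X Y : C} {f : X ⟶ Y} (hf : QD.Q f) : Epi f := by
  obtain ⟨i⟩ := QD.regEpi f hf
  exact RegularEpi.epi f i

lemma QData.whiskerLeft_mem (QD : QData C) (W : C) {X Y : C} {f : X ⟶ Y} (hf : QD.Q f) :
    QD.Q (W ◁ f) := by
  have := QD.tensor_mem (𝟙 W) f (QD.iso_mem _ inferInstance) hf
  rwa [id_tensorHom] at this

lemma QData.whiskerRight_mem (QD : QData C) {X Y : C} {f : X ⟶ Y} (hf : QD.Q f) (W : C) :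
    QD.Q (f ▷ W) := by
  have := QD.tensor_mem f (𝟙 W) hf (QD.iso_mem _ inferInstance)
  rwa [tensorHom_id] at this

end Aux

/-- Proposition 3.7: the semigroup morphisms `f` whose induced `𝕄`-morphism
`f^# = (m ∘ (f ⊗ 1), m ∘ (1 ⊗ f))` has components in `Q` form a subcategory `𝒟` of the
category of semigroups; `f ↦ f^#` is a faithful identity-on-objects functor `𝒟 ⟶ ℳ`
which is full on isomorphisms. -/
theorem subcategory_D_and_sharp_functor (QD : QData C) :
    -- identities lie in 𝒟
    (∀ X : MObj QD,
      ((𝟙 X.A ⊗ₘ 𝟙 X.A) ≫ X.m = X.m ≫ 𝟙 X.A) ∧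
      QD.Q ((𝟙 X.A ▷ X.A) ≫ X.m) ∧ QD.Q ((X.A ◁ 𝟙 X.A) ≫ X.m)) ∧
    -- 𝒟 is closed under composition
    (∀ (X Y Z : MObj QD) (f : X.A ⟶ Y.A) (g : Y.A ⟶ Z.A),
      (f ⊗ₘ f) ≫ Y.m = X.m ≫ f → QD.Q ((f ▷ Y.A) ≫ Y.m) → QD.Q ((Y.A ◁ f) ≫ Y.m) →
      (g ⊗ₘ g) ≫ Z.m = Y.m ≫ g → QD.Q ((g ▷ Z.A) ≫ Z.m) → QD.Q ((Z.A ◁ g) ≫ Z.m) →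
      ((f ≫ g) ⊗ₘ (f ≫ g)) ≫ Z.m = X.m ≫ (f ≫ g) ∧
      QD.Q (((f ≫ g) ▷ Z.A) ≫ Z.m) ∧ QD.Q ((Z.A ◁ (f ≫ g)) ≫ Z.m)) ∧
    -- `f^#` is a morphism of ℳ
    (∀ (X Y : MObj QD) (f : X.A ⟶ Y.A),
      (f ⊗ₘ f) ≫ Y.m = X.m ≫ f → QD.Q ((f ▷ Y.A) ≫ Y.m) → QD.Q ((Y.A ◁ f) ≫ Y.m) →
      IsMMor Y.m ((f ▷ Y.A) ≫ Y.m) ((Y.A ◁ f) ≫ Y.m) ∧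
      Mult₁ X.m ((f ▷ Y.A) ≫ Y.m) ∧ Mult₂ X.m ((Y.A ◁ f) ≫ Y.m)) ∧
    -- `(f ≫ g)^#` satisfies the defining equations of the composite `g^# ∙ f^#`
    (∀ (X Y Z : MObj QD) (f : X.A ⟶ Y.A) (g : Y.A ⟶ Z.A),
      (f ⊗ₘ f) ≫ Y.m = X.m ≫ f → (g ⊗ₘ g) ≫ Z.m = Y.m ≫ g →
      ((α_ X.A Y.A Z.A).hom ≫ (X.A ◁ ((g ▷ Z.A) ≫ Z.m)) ≫ (((f ≫ g) ▷ Z.A) ≫ Z.m) =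
        (((f ▷ Y.A) ≫ Y.m) ▷ Z.A) ≫ ((g ▷ Z.A) ≫ Z.m)) ∧
      ((((Z.A ◁ g) ≫ Z.m) ▷ X.A) ≫ ((Z.A ◁ (f ≫ g)) ≫ Z.m) =
        (α_ Z.A Y.A X.A).hom ≫ (Z.A ◁ ((Y.A ◁ f) ≫ Y.m)) ≫ ((Z.A ◁ g) ≫ Z.m))) ∧
    -- faithfulness
    (∀ (X Y : MObj QD) (f g : X.A ⟶ Y.A),
      (f ▷ Y.A) ≫ Y.m = (g ▷ Y.A) ≫ Y.m → (Y.A ◁ f) ≫ Y.m = (Y.A ◁ g) ≫ Y.m →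
      f = g) ∧
    -- fullness on isomorphisms
    (∀ (X Y : MObj QD) (h : MHom X Y) (k : MHom Y X),
      -- `h ∙ k = i_Y` and `k ∙ h = i_X`
      ((α_ Y.A X.A Y.A).hom ≫ (Y.A ◁ h.f₁) ≫ Y.m = (k.f₁ ▷ Y.A) ≫ h.f₁) →
      ((h.f₂ ▷ Y.A) ≫ Y.m = (α_ Y.A X.A Y.A).hom ≫ (Y.A ◁ k.f₂) ≫ h.f₂) →
      ((α_ X.A Y.A X.A).hom ≫ (X.A ◁ k.f₁) ≫ X.m = (h.f₁ ▷ X.A) ≫ k.f₁) →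
      ((k.f₂ ▷ X.A) ≫ X.m = (α_ X.A Y.A X.A).hom ≫ (X.A ◁ h.f₂) ≫ k.f₂) →
      ∃ f : X.A ⟶ Y.A, IsIso f ∧ (f ⊗ₘ f) ≫ Y.m = X.m ≫ f ∧
        (f ▷ Y.A) ≫ Y.m = h.f₁ ∧ (Y.A ◁ f) ≫ Y.m = h.f₂) := by
  refine ⟨?_, ?_, ?_, ?_, ?_, ?_⟩
  · -- identities
    intro X
    refine ⟨by simp, ?_, ?_⟩
    · simpa using X.mQ
    · simpa using X.mQ
  · -- closure under composition
    intro X Y Z f g hf qf1 qf2 hg qg1 qg2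
    have hmult : ((f ≫ g) ⊗ₘ (f ≫ g)) ≫ Z.m = X.m ≫ (f ≫ g) := by
      rw [← tensorHom_comp_tensorHom, assoc, hg, ← assoc, hf, assoc]
    refine ⟨hmult, ?_, ?_⟩
    · refine QD.cancel ((α_ X.A Y.A Z.A).hom ≫ (X.A ◁ ((g ▷ Z.A) ≫ Z.m))) _ ?_ ?_
      · exact QD.comp_mem _ _ (QD.iso_mem _ inferInstance) (QD.whiskerLeft_mem _ qg1)
      · have e1 := sharp_comp₁ (p := Z.m) Z.assoc hg (f := f)
        have e1' : ((α_ X.A Y.A Z.A).hom ≫ (X.A ◁ ((g ▷ Z.A) ≫ Z.m))) ≫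
            (((f ≫ g) ▷ Z.A) ≫ Z.m) =
            (((f ▷ Y.A) ≫ Y.m) ▷ Z.A) ≫ ((g ▷ Z.A) ≫ Z.m) := by
          rw [assoc, e1]
        rw [e1']
        exact QD.comp_mem _ _ (QD.whiskerRight_mem qf1 _) qg1
    · refine QD.cancel ((((Z.A ◁ g) ≫ Z.m)) ▷ X.A) _ ?_ ?_
      · exact QD.whiskerRight_mem qg2 _
      · have e2 := sharp_comp₂ (p := Z.m) Z.assoc hg (f := f)
        rw [e2]
        exact QD.comp_mem _ _ (QD.iso_mem _ inferInstance)
          (QD.comp_mem _ _ (QD.whiskerLeft_mem _ qf2) qg2)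
  · -- f^# is a morphism of ℳ
    intro X Y f hf qf1 qf2
    exact ⟨sharp_compat Y.assoc f, sharp_mult₁ Y.assoc hf, sharp_mult₂ Y.assoc hf⟩
  · -- functoriality equations
    intro X Y Z f g hf hg
    exact ⟨sharp_comp₁ Z.assoc hg, sharp_comp₂ Z.assoc hg⟩
  · -- faithfulness
    intro X Y f g h1 _h2
    exact nondeg_cancel_right Y.nondeg h1
  · -- fullness on isomorphisms
    intro X Y h k E1 E2 E3 E4
    have hcmp : (h.f₂ ▷ Y.A) ≫ Y.m = (α_ Y.A X.A Y.A).hom ≫ (Y.A ◁ h.f₁) ≫ Y.m := h.compat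
    have kcmp : (k.f₂ ▷ X.A) ≫ X.m = (α_ X.A Y.A X.A).hom ≫ (X.A ◁ k.f₁) ≫ X.m := k.compat
    have KI : (Y.A ◁ h.f₁) ≫ Y.m = (Y.A ◁ k.f₂) ≫ h.f₂ := by
      have := hcmp.symm.trans E2
      rwa [cancel_epi] at this
    have KI' : (X.A ◁ k.f₁) ≫ X.m = (X.A ◁ h.f₂) ≫ k.f₂ := by
      have := kcmp.symm.trans E4
      rwa [cancel_epi] at this
    haveI eYk : Epi (Y.A ◁ k.f₂) := QD.epiOfQ (QD.whiskerLeft_mem _ k.dense₂)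
    haveI ekY : Epi (k.f₂ ▷ Y.A) := QD.epiOfQ (QD.whiskerRight_mem k.dense₂ _)
    haveI ekX : Epi (k.f₂ ▷ X.A) := QD.epiOfQ (QD.whiskerRight_mem k.dense₂ _)
    haveI ehX : Epi (h.f₂ ▷ X.A) := QD.epiOfQ (QD.whiskerRight_mem h.dense₂ _)
    haveI ehY : Epi (h.f₂ ▷ Y.A) := QD.epiOfQ (QD.whiskerRight_mem h.dense₂ _)
    obtain ⟨Z₁, u, v, huv, ⟨hc⟩, -, -⟩ := QD.coeq k.f₂ k.dense₂
    have w : u ≫ h.f₁ = v ≫ h.f₁ := by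
      apply nondeg_cancel_left Y.nondeg
      have auxx : ∀ r : Z₁ ⟶ X.A ⊗ Y.A,
          (Y.A ◁ (r ≫ h.f₁)) ≫ Y.m = (Y.A ◁ (r ≫ k.f₂)) ≫ h.f₂ := by
        intro r
        rw [MonoidalCategory.whiskerLeft_comp, MonoidalCategory.whiskerLeft_comp,
          assoc, assoc, KI]
      rw [auxx u, auxx v, huv]
    obtain ⟨Z₂, u', v', huv', ⟨hc'⟩, -, -⟩ := QD.coeq h.f₂ h.dense₂
    have w' : u' ≫ k.f₁ = v' ≫ k.f₁ := by
      apply nondeg_cancel_left X.nondeg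
      have auxx : ∀ r : Z₂ ⟶ Y.A ⊗ X.A,
          (X.A ◁ (r ≫ k.f₁)) ≫ X.m = (X.A ◁ (r ≫ h.f₂)) ≫ k.f₂ := by
        intro r
        rw [MonoidalCategory.whiskerLeft_comp, MonoidalCategory.whiskerLeft_comp,
          assoc, assoc, KI']
      rw [auxx u', auxx v', huv']
    let f : X.A ⟶ Y.A := Cofork.IsColimit.desc hc h.f₁ w
    have fdef : k.f₂ ≫ f = h.f₁ := Cofork.IsColimit.π_desc' hc h.f₁ w
    let g : Y.A ⟶ X.A := Cofork.IsColimit.desc hc' k.f₁ w'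
    have gdef : h.f₂ ≫ g = k.f₁ := Cofork.IsColimit.π_desc' hc' k.f₁ w'
    have ha : (f ▷ Y.A) ≫ Y.m = h.f₁ := by
      have lin := mmor_linR Y.nondeg Y.assoc h.compat
      have km2 : (α_ X.A Y.A Y.A).hom ≫ (X.A ◁ Y.m) ≫ k.f₂ = (k.f₂ ▷ Y.A) ≫ k.f₂ := k.mult₂
      rw [← cancel_epi (k.f₂ ▷ Y.A)]
      calc (k.f₂ ▷ Y.A) ≫ (f ▷ Y.A) ≫ Y.m
          = ((k.f₂ ≫ f) ▷ Y.A) ≫ Y.m := by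
            rw [MonoidalCategory.comp_whiskerRight, assoc]
        _ = (h.f₁ ▷ Y.A) ≫ Y.m := by rw [fdef]
        _ = (α_ X.A Y.A Y.A).hom ≫ (X.A ◁ Y.m) ≫ h.f₁ := lin
        _ = (α_ X.A Y.A Y.A).hom ≫ (X.A ◁ Y.m) ≫ k.f₂ ≫ f := by rw [← fdef]
        _ = ((k.f₂ ▷ Y.A) ≫ k.f₂) ≫ f := by
            rw [← km2]
            simp only [assoc]
        _ = (k.f₂ ▷ Y.A) ≫ h.f₁ := by rw [assoc, fdef]
    have ha' : (g ▷ X.A) ≫ X.m = k.f₁ := by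
      have lin := mmor_linR X.nondeg X.assoc k.compat
      have hm2 : (α_ Y.A X.A X.A).hom ≫ (Y.A ◁ X.m) ≫ h.f₂ = (h.f₂ ▷ X.A) ≫ h.f₂ := h.mult₂
      rw [← cancel_epi (h.f₂ ▷ X.A)]
      calc (h.f₂ ▷ X.A) ≫ (g ▷ X.A) ≫ X.m
          = ((h.f₂ ≫ g) ▷ X.A) ≫ X.m := by
            rw [MonoidalCategory.comp_whiskerRight, assoc]
        _ = (k.f₁ ▷ X.A) ≫ X.m := by rw [gdef]
        _ = (α_ Y.A X.A X.A).hom ≫ (Y.A ◁ X.m) ≫ k.f₁ := lin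
        _ = (α_ Y.A X.A X.A).hom ≫ (Y.A ◁ X.m) ≫ h.f₂ ≫ g := by rw [← gdef]
        _ = ((h.f₂ ▷ X.A) ≫ h.f₂) ≫ g := by
            rw [← hm2]
            simp only [assoc]
        _ = (h.f₂ ▷ X.A) ≫ k.f₁ := by rw [assoc, gdef]
    have hb : (Y.A ◁ f) ≫ Y.m = h.f₂ := by
      rw [← cancel_epi (Y.A ◁ k.f₂)]
      calc (Y.A ◁ k.f₂) ≫ (Y.A ◁ f) ≫ Y.m
          = (Y.A ◁ (k.f₂ ≫ f)) ≫ Y.m := by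
            rw [MonoidalCategory.whiskerLeft_comp, assoc]
        _ = (Y.A ◁ h.f₁) ≫ Y.m := by rw [fdef]
        _ = (Y.A ◁ k.f₂) ≫ h.f₂ := KI
    have ya : (Y.m ▷ Y.A) ≫ Y.m = (α_ Y.A Y.A Y.A).hom ≫ (Y.A ◁ Y.m) ≫ Y.m := Y.assoc
    have hm1 : (X.m ▷ Y.A) ≫ h.f₁ =
        (α_ X.A X.A Y.A).hom ≫ (X.A ◁ h.f₁) ≫ h.f₁ := h.mult₁
    have hmul : (f ⊗ₘ f) ≫ Y.m = X.m ≫ f := by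
      apply nondeg_cancel_right Y.nondeg
      have nat : ((f ⊗ₘ f) ▷ Y.A) ≫ (α_ Y.A Y.A Y.A).hom =
          (α_ X.A X.A Y.A).hom ≫ (f ⊗ₘ (f ▷ Y.A)) := by
        rw [← tensorHom_id (f ⊗ₘ f) Y.A, associator_naturality f f (𝟙 Y.A), tensorHom_id]
      calc (((f ⊗ₘ f) ≫ Y.m) ▷ Y.A) ≫ Y.m
          = ((f ⊗ₘ f) ▷ Y.A) ≫ (Y.m ▷ Y.A) ≫ Y.m := by
            rw [MonoidalCategory.comp_whiskerRight, assoc]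
        _ = ((f ⊗ₘ f) ▷ Y.A) ≫ (α_ Y.A Y.A Y.A).hom ≫ (Y.A ◁ Y.m) ≫ Y.m := by rw [ya]
        _ = (α_ X.A X.A Y.A).hom ≫ (f ⊗ₘ (f ▷ Y.A)) ≫ (Y.A ◁ Y.m) ≫ Y.m := by
            rw [reassoc_of% nat]
        _ = (α_ X.A X.A Y.A).hom ≫ (X.A ◁ (f ▷ Y.A)) ≫ (f ▷ (Y.A ⊗ Y.A)) ≫
              (Y.A ◁ Y.m) ≫ Y.m := by rw [tensorHom_def' f (f ▷ Y.A), assoc]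
        _ = (α_ X.A X.A Y.A).hom ≫ (X.A ◁ (f ▷ Y.A)) ≫ (X.A ◁ Y.m) ≫ (f ▷ Y.A) ≫ Y.m := by
            rw [← whisker_exchange_assoc]
        _ = (α_ X.A X.A Y.A).hom ≫ (X.A ◁ ((f ▷ Y.A) ≫ Y.m)) ≫ ((f ▷ Y.A) ≫ Y.m) := by
            simp only [MonoidalCategory.whiskerLeft_comp, assoc]
        _ = (α_ X.A X.A Y.A).hom ≫ (X.A ◁ h.f₁) ≫ h.f₁ := by rw [ha]
        _ = (X.m ▷ Y.A) ≫ h.f₁ := hm1.symm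
        _ = (X.m ▷ Y.A) ≫ (f ▷ Y.A) ≫ Y.m := by rw [← ha]
        _ = ((X.m ≫ f) ▷ Y.A) ≫ Y.m := by
            rw [MonoidalCategory.comp_whiskerRight, assoc]
    have hfg : f ≫ g = 𝟙 X.A := by
      have t : (f ▷ X.A) ≫ k.f₁ = X.m := by
        rw [← cancel_epi (k.f₂ ▷ X.A)]
        calc (k.f₂ ▷ X.A) ≫ (f ▷ X.A) ≫ k.f₁
            = ((k.f₂ ≫ f) ▷ X.A) ≫ k.f₁ := by
              rw [MonoidalCategory.comp_whiskerRight, assoc]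
          _ = (h.f₁ ▷ X.A) ≫ k.f₁ := by rw [fdef]
          _ = (α_ X.A Y.A X.A).hom ≫ (X.A ◁ k.f₁) ≫ X.m := E3.symm
          _ = (α_ X.A Y.A X.A).hom ≫ (X.A ◁ h.f₂) ≫ k.f₂ := by rw [KI']
          _ = (k.f₂ ▷ X.A) ≫ X.m := E4.symm
      apply nondeg_cancel_right X.nondeg
      calc ((f ≫ g) ▷ X.A) ≫ X.m
          = (f ▷ X.A) ≫ (g ▷ X.A) ≫ X.m := by
            rw [MonoidalCategory.comp_whiskerRight, assoc]
        _ = (f ▷ X.A) ≫ k.f₁ := by rw [ha']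
        _ = X.m := t
        _ = (𝟙 X.A ▷ X.A) ≫ X.m := by simp
    have hgf : g ≫ f = 𝟙 Y.A := by
      have t : (g ▷ Y.A) ≫ h.f₁ = Y.m := by
        rw [← cancel_epi (h.f₂ ▷ Y.A)]
        calc (h.f₂ ▷ Y.A) ≫ (g ▷ Y.A) ≫ h.f₁
            = ((h.f₂ ≫ g) ▷ Y.A) ≫ h.f₁ := by
              rw [MonoidalCategory.comp_whiskerRight, assoc]
          _ = (k.f₁ ▷ Y.A) ≫ h.f₁ := by rw [gdef]
          _ = (α_ Y.A X.A Y.A).hom ≫ (Y.A ◁ h.f₁) ≫ Y.m := E1.symm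
          _ = (α_ Y.A X.A Y.A).hom ≫ (Y.A ◁ k.f₂) ≫ h.f₂ := by rw [KI]
          _ = (h.f₂ ▷ Y.A) ≫ Y.m := E2.symm
      apply nondeg_cancel_right Y.nondeg
      calc ((g ≫ f) ▷ Y.A) ≫ Y.m
          = (g ▷ Y.A) ≫ (f ▷ Y.A) ≫ Y.m := by
            rw [MonoidalCategory.comp_whiskerRight, assoc]
        _ = (g ▷ Y.A) ≫ h.f₁ := by rw [ha]
        _ = Y.m := t
        _ = (𝟙 Y.A ▷ Y.A) ≫ Y.m := by simp
    exact ⟨f, ⟨g, hfg, hgf⟩, hmul, ha, hb⟩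
end

section
/- In a braided monoidal category, if semigroups A and B have non-degenerate multiplications, then the tensor product semigroup A⊗B, with multiplication (m_A⊗m_B)∘(1⊗c_{B,A}⊗1) : (A⊗B)⊗(A⊗B) → A⊗B, also has non-degenerate multiplication. -/
open CategoryTheory Category MonoidalCategory Limits

universe v u

variable {C : Type u} [Category.{v} C] [MonoidalCategory C]

section Aux
open BraidedCategory
variable [BraidedCategory C] {A B : C}

lemma braid1 (A B : C) :
    (α_ (A ⊗ B) B A).hom ≫ (α_ A B (B ⊗ A)).hom ≫ (A ◁ B ◁ (β_ B A).hom) ≫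
      (A ◁ (α_ B A B).inv) ≫ (A ◁ ((β_ B A).hom ▷ B)) ≫ (α_ A (A ⊗ B) B).inv ≫
      ((α_ A A B).inv ▷ B) ≫ (α_ (A ⊗ A) B B).hom ≫ (β_ (B ⊗ B) (A ⊗ A)).inv =
    ((α_ A B B).hom ▷ A) ≫ ((β_ (B ⊗ B) A).inv ▷ A) ≫ (α_ (B ⊗ B) A A).hom := by
  simp [yang_baxter_assoc]

lemma core1 (mA : A ⊗ A ⟶ A) (mB : B ⊗ B ⟶ B) :
    (α_ (A ⊗ B) B A).hom ≫ (α_ A B (B ⊗ A)).hom ≫ (A ◁ B ◁ (β_ B A).hom) ≫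
      (A ◁ (α_ B A B).inv) ≫ (A ◁ ((β_ B A).hom ▷ B)) ≫ (α_ A (A ⊗ B) B).inv ≫
      ((α_ A A B).inv ▷ B) ≫ ((mA ▷ B) ▷ B) ≫ (α_ A B B).hom ≫ (A ◁ mB) ≫ (β_ B A).inv =
    ((α_ A B B).hom ▷ A) ≫ (α_ A (B ⊗ B) A).hom ≫ (A ◁ (mB ▷ A)) ≫ (α_ A B A).inv ≫
      ((β_ B A).inv ▷ A) ≫ (α_ B A A).hom ≫ (B ◁ mA) := by
  calc _ = (α_ (A ⊗ B) B A).hom ≫ (α_ A B (B ⊗ A)).hom ≫ (A ◁ B ◁ (β_ B A).hom) ≫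
      (A ◁ (α_ B A B).inv) ≫ (A ◁ ((β_ B A).hom ▷ B)) ≫ (α_ A (A ⊗ B) B).inv ≫
      ((α_ A A B).inv ▷ B) ≫ (α_ (A ⊗ A) B B).hom ≫ (mA ▷ (B ⊗ B)) ≫
      ((A ◁ mB) ≫ (β_ B A).inv) := by monoidal
    _ = (α_ (A ⊗ B) B A).hom ≫ (α_ A B (B ⊗ A)).hom ≫ (A ◁ B ◁ (β_ B A).hom) ≫
      (A ◁ (α_ B A B).inv) ≫ (A ◁ ((β_ B A).hom ▷ B)) ≫ (α_ A (A ⊗ B) B).inv ≫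
      ((α_ A A B).inv ▷ B) ≫ (α_ (A ⊗ A) B B).hom ≫ ((mA ▷ (B ⊗ B)) ≫
      (β_ (B ⊗ B) A).inv) ≫ (mB ▷ A) := by rw [braiding_inv_naturality_right]; simp only [assoc]
    _ = ((α_ (A ⊗ B) B A).hom ≫ (α_ A B (B ⊗ A)).hom ≫ (A ◁ B ◁ (β_ B A).hom) ≫
      (A ◁ (α_ B A B).inv) ≫ (A ◁ ((β_ B A).hom ▷ B)) ≫ (α_ A (A ⊗ B) B).inv ≫
      ((α_ A A B).inv ▷ B) ≫ (α_ (A ⊗ A) B B).hom ≫ (β_ (B ⊗ B) (A ⊗ A)).inv) ≫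
      ((B ⊗ B) ◁ mA) ≫ (mB ▷ A) := by rw [braiding_inv_naturality_left]; simp only [assoc]
    _ = (((α_ A B B).hom ▷ A) ≫ ((β_ (B ⊗ B) A).inv ▷ A) ≫ (α_ (B ⊗ B) A A).hom) ≫
      (mB ▷ (A ⊗ A)) ≫ (B ◁ mA) := by rw [braid1, whisker_exchange]
    _ = ((α_ A B B).hom ▷ A) ≫ (((β_ (B ⊗ B) A).inv ≫ (mB ▷ A)) ▷ A) ≫
      (α_ B A A).hom ≫ (B ◁ mA) := by monoidal
    _ = _ := by rw [← braiding_inv_naturality_right]; monoidal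

lemma key0 (mA : A ⊗ A ⟶ A) (mB : B ⊗ B ⟶ B) (Y : C) :
    (α_ (Y ⊗ (A ⊗ B)) B A).hom ≫ ((Y ⊗ (A ⊗ B)) ◁ (β_ B A).hom) ≫
      (α_ Y (A ⊗ B) (A ⊗ B)).hom ≫ (Y ◁ (tensorμ A B A B ≫ (mA ⊗ₘ mB))) ≫
      (Y ◁ (β_ B A).inv) ≫ (α_ Y B A).inv =
    ((((α_ Y A B).inv ▷ B) ≫ (α_ (Y ⊗ A) B B).hom ≫ ((Y ⊗ A) ◁ mB) ≫
      (α_ Y A B).hom ≫ (Y ◁ (β_ B A).inv) ≫ (α_ Y B A).inv) ▷ A) ≫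
      (α_ (Y ⊗ B) A A).hom ≫ ((Y ⊗ B) ◁ mA) := by
  simp only [tensorμ, MonoidalCategory.tensorHom_def]
  calc _ = (α_ Y (A ⊗ B) B).hom ▷ A ≫ (α_ Y ((A ⊗ B) ⊗ B) A).hom ≫
      (Y ◁ ((α_ (A ⊗ B) B A).hom ≫ (α_ A B (B ⊗ A)).hom ≫ (A ◁ B ◁ (β_ B A).hom) ≫
        (A ◁ (α_ B A B).inv) ≫ (A ◁ ((β_ B A).hom ▷ B)) ≫ (α_ A (A ⊗ B) B).inv ≫
        ((α_ A A B).inv ▷ B) ≫ ((mA ▷ B) ▷ B) ≫ (α_ A B B).hom ≫ (A ◁ mB) ≫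
        (β_ B A).inv)) ≫ (α_ Y B A).inv := by
          monoidal
    _ = (α_ Y (A ⊗ B) B).hom ▷ A ≫ (α_ Y ((A ⊗ B) ⊗ B) A).hom ≫
      (Y ◁ (((α_ A B B).hom ▷ A) ≫ (α_ A (B ⊗ B) A).hom ≫ (A ◁ (mB ▷ A)) ≫
        (α_ A B A).inv ≫ ((β_ B A).inv ▷ A) ≫ (α_ B A A).hom ≫ (B ◁ mA))) ≫
      (α_ Y B A).inv := by rw [core1]
    _ = _ := by monoidal

lemma key1 (mA : A ⊗ A ⟶ A) (mB : B ⊗ B ⟶ B) {X Y : C} (f : X ⟶ Y ⊗ (A ⊗ B)) :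
    (α_ X B A).hom ≫ (X ◁ (β_ B A).hom) ≫ (f ▷ (A ⊗ B)) ≫ (α_ Y (A ⊗ B) (A ⊗ B)).hom ≫
      (Y ◁ (tensorμ A B A B ≫ (mA ⊗ₘ mB))) ≫ (Y ◁ (β_ B A).inv) ≫ (α_ Y B A).inv =
    ((((f ≫ (α_ Y A B).inv) ▷ B) ≫ (α_ (Y ⊗ A) B B).hom ≫ ((Y ⊗ A) ◁ mB) ≫
      (α_ Y A B).hom ≫ (Y ◁ (β_ B A).inv) ≫ (α_ Y B A).inv) ▷ A) ≫
      (α_ (Y ⊗ B) A A).hom ≫ ((Y ⊗ B) ◁ mA) := by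
  rw [whisker_exchange_assoc]
  calc _ = ((f ▷ B) ▷ A) ≫ (α_ (Y ⊗ (A ⊗ B)) B A).hom ≫ ((Y ⊗ (A ⊗ B)) ◁ (β_ B A).hom) ≫
      (α_ Y (A ⊗ B) (A ⊗ B)).hom ≫ (Y ◁ (tensorμ A B A B ≫ (mA ⊗ₘ mB))) ≫
      (Y ◁ (β_ B A).inv) ≫ (α_ Y B A).inv := by
          rw [← associator_naturality_left_assoc]
    _ = _ := by rw [key0 mA mB Y]; simp only [comp_whiskerRight, assoc]

lemma braid2 (A B : C) :
    ((β_ B A).hom ▷ (A ⊗ B)) ≫ tensorμ A B A B ≫ (β_ (B ⊗ B) (A ⊗ A)).inv =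
    (α_ B A (A ⊗ B)).hom ≫ (B ◁ (α_ A A B).inv) ≫ (B ◁ (β_ B (A ⊗ A)).inv) ≫
      (α_ B B (A ⊗ A)).inv := by
  rw [← cancel_mono (β_ (B ⊗ B) (A ⊗ A)).hom]
  calc _ = ((β_ B A).hom ▷ (A ⊗ B)) ≫ tensorμ A B A B := by
        simp only [assoc, Iso.inv_hom_id, comp_id]
    _ = (α_ B A (A ⊗ B)).hom ≫ (B ◁ (α_ A A B).inv) ≫ (α_ B (A ⊗ A) B).inv ≫
        ((β_ B (A ⊗ A)).hom ▷ B) ≫ (α_ (A ⊗ A) B B).hom := by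
          simp only [tensorμ, braiding_tensor_right_hom, comp_whiskerRight, assoc]
          monoidal
    _ = _ := by
          rw [braiding_tensor_left_hom B B (A ⊗ A)]
          simp only [assoc, Iso.inv_hom_id_assoc, whiskerLeft_inv_hom_assoc]

lemma core2 (mA : A ⊗ A ⟶ A) (mB : B ⊗ B ⟶ B) :
    ((β_ B A).hom ▷ (A ⊗ B)) ≫ tensorμ A B A B ≫ (mA ⊗ₘ mB) ≫ (β_ B A).inv =
    (α_ B A (A ⊗ B)).hom ≫
      (B ◁ ((α_ A A B).inv ≫ (mA ▷ B) ≫ (β_ B A).inv)) ≫ (α_ B B A).inv ≫ (mB ▷ A) := by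
  calc _ = (((β_ B A).hom ▷ (A ⊗ B)) ≫ tensorμ A B A B ≫ (β_ (B ⊗ B) (A ⊗ A)).inv) ≫
        (mB ⊗ₘ mA) := by
          rw [braiding_inv_naturality]; simp only [assoc]
    _ = ((α_ B A (A ⊗ B)).hom ≫ (B ◁ (α_ A A B).inv) ≫ (B ◁ (β_ B (A ⊗ A)).inv) ≫
        (α_ B B (A ⊗ A)).inv) ≫ (mB ⊗ₘ mA) := by
          rw [braid2]
    _ = (α_ B A (A ⊗ B)).hom ≫
        (B ◁ ((α_ A A B).inv ≫ ((β_ B (A ⊗ A)).inv ≫ (B ◁ mA)))) ≫ (α_ B B A).inv ≫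
        (mB ▷ A) := by
          rw [tensorHom_def']; monoidal
    _ = _ := by rw [← braiding_inv_naturality_left]

lemma key02 (mA : A ⊗ A ⟶ A) (mB : B ⊗ B ⟶ B) (Y : C) :
    (α_ B A ((A ⊗ B) ⊗ Y)).inv ≫ ((β_ B A).hom ▷ ((A ⊗ B) ⊗ Y)) ≫
      (α_ (A ⊗ B) (A ⊗ B) Y).inv ≫ ((tensorμ A B A B ≫ (mA ⊗ₘ mB)) ▷ Y) ≫
      ((β_ B A).inv ▷ Y) ≫ (α_ B A Y).hom =
    (B ◁ ((A ◁ (α_ A B Y).hom) ≫ (α_ A A (B ⊗ Y)).inv ≫ (mA ▷ (B ⊗ Y)) ≫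
      (α_ A B Y).inv ≫ ((β_ B A).inv ▷ Y) ≫ (α_ B A Y).hom)) ≫
      (α_ B B (A ⊗ Y)).inv ≫ (mB ▷ (A ⊗ Y)) := by
  calc _ = ((α_ B A ((A ⊗ B) ⊗ Y)).inv ≫ (α_ (B ⊗ A) (A ⊗ B) Y).inv) ≫
        ((((β_ B A).hom ▷ (A ⊗ B)) ≫ tensorμ A B A B ≫ (mA ⊗ₘ mB) ≫ (β_ B A).inv) ▷ Y) ≫
        (α_ B A Y).hom := by
          monoidal
    _ = ((α_ B A ((A ⊗ B) ⊗ Y)).inv ≫ (α_ (B ⊗ A) (A ⊗ B) Y).inv) ≫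
        (((α_ B A (A ⊗ B)).hom ≫ (B ◁ ((α_ A A B).inv ≫ (mA ▷ B) ≫ (β_ B A).inv)) ≫
          (α_ B B A).inv ≫ (mB ▷ A)) ▷ Y) ≫ (α_ B A Y).hom := by
          rw [core2]
    _ = _ := by monoidal

lemma key2 (mA : A ⊗ A ⟶ A) (mB : B ⊗ B ⟶ B) {X Y : C} (g : X ⟶ (A ⊗ B) ⊗ Y) :
    (α_ B A X).inv ≫ ((β_ B A).hom ▷ X) ≫ ((A ⊗ B) ◁ g) ≫ (α_ (A ⊗ B) (A ⊗ B) Y).inv ≫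
      ((tensorμ A B A B ≫ (mA ⊗ₘ mB)) ▷ Y) ≫ ((β_ B A).inv ▷ Y) ≫ (α_ B A Y).hom =
    (B ◁ ((A ◁ (g ≫ (α_ A B Y).hom)) ≫ (α_ A A (B ⊗ Y)).inv ≫ (mA ▷ (B ⊗ Y)) ≫
      (α_ A B Y).inv ≫ ((β_ B A).inv ▷ Y) ≫ (α_ B A Y).hom)) ≫
      (α_ B B (A ⊗ Y)).inv ≫ (mB ▷ (A ⊗ Y)) := by
  rw [← whisker_exchange_assoc]
  calc _ = (B ◁ (A ◁ g)) ≫ (α_ B A ((A ⊗ B) ⊗ Y)).inv ≫ ((β_ B A).hom ▷ ((A ⊗ B) ⊗ Y)) ≫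
      (α_ (A ⊗ B) (A ⊗ B) Y).inv ≫ ((tensorμ A B A B ≫ (mA ⊗ₘ mB)) ▷ Y) ≫
      ((β_ B A).inv ▷ Y) ≫ (α_ B A Y).hom := by
          rw [← associator_inv_naturality_right_assoc]
    _ = _ := by
          rw [key02 mA mB Y]
          simp only [MonoidalCategory.whiskerLeft_comp, assoc]

end Aux

/-- Proposition 4.1: the monoidal product of non-degenerate semigroups,
with multiplication `(m_A ⊗ m_B) ∘ (1 ⊗ c ⊗ 1)`, is non-degenerate. -/
theorem tensor_nondeg [BraidedCategory C] {A B : C} (mA : A ⊗ A ⟶ A) (mB : B ⊗ B ⟶ B)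
    (hA : NonDeg A mA) (hB : NonDeg B mB) :
    NonDeg (A ⊗ B) (tensorμ A B A B ≫ (mA ⊗ₘ mB)) := by
  constructor
  · intro X Y f g hfg
    simp only at hfg
    have hfg' := congrArg (fun p => p ≫ ((Y ◁ (β_ B A).inv) ≫ (α_ Y B A).inv)) hfg
    simp only [assoc] at hfg'
    have e1 := key1 mA mB f
    rw [hfg', key1 mA mB g] at e1
    have e2 := hA.1 (X ⊗ B) (Y ⊗ B) e1.symm
    have e3 : ((f ≫ (α_ Y A B).inv) ▷ B) ≫ (α_ (Y ⊗ A) B B).hom ≫ ((Y ⊗ A) ◁ mB) =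
        ((g ≫ (α_ Y A B).inv) ▷ B) ≫ (α_ (Y ⊗ A) B B).hom ≫ ((Y ⊗ A) ◁ mB) := by
      have := congrArg
        (fun p => p ≫ ((α_ Y B A).hom ≫ (Y ◁ (β_ B A).hom) ≫ (α_ Y A B).inv)) e2
      simpa using this
    have e4 := hB.1 X (Y ⊗ A) e3
    have := congrArg (fun p => p ≫ (α_ Y A B).hom) e4
    simpa using this
  · intro X Y f g hfg
    simp only at hfg
    have hfg' := congrArg (fun p => p ≫ (((β_ B A).inv ▷ Y) ≫ (α_ B A Y).hom)) hfg
    simp only [assoc] at hfg'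
    have e1 := key2 mA mB f
    rw [hfg', key2 mA mB g] at e1
    have e2 := hB.2 (A ⊗ X) (A ⊗ Y) e1.symm
    have e3 : (A ◁ (f ≫ (α_ A B Y).hom)) ≫ (α_ A A (B ⊗ Y)).inv ≫ (mA ▷ (B ⊗ Y)) =
        (A ◁ (g ≫ (α_ A B Y).hom)) ≫ (α_ A A (B ⊗ Y)).inv ≫ (mA ▷ (B ⊗ Y)) := by
      have := congrArg
        (fun p => p ≫ ((α_ B A Y).inv ≫ ((β_ B A).hom ▷ Y) ≫ (α_ A B Y).hom)) e2
      simpa using this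
    have e4 := hA.2 X (B ⊗ Y) e3
    have := congrArg (fun p => p ≫ (α_ A B Y).inv) e4
    simpa using this
end

section
/- If f : A ⇸ B and f' : A' ⇸ B' are M-morphisms in a braided monoidal category, then the pair of morphisms (f₁⊗f'₁)∘(1⊗c_{A',B}⊗1) : A⊗A'⊗B⊗B' → B⊗B' and (f₂⊗f'₂)∘(1⊗c_{B',A}⊗1) : B⊗B'⊗A⊗A' → B⊗B' defines an M-morphism A⊗A' ⇸ B⊗B' (with respect to the tensor product semigroup structures), which is multiplicative if f and f' are multiplicative, and dense if f and f' are dense. -/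
open CategoryTheory Category MonoidalCategory Limits

universe v u

variable {C : Type u} [Category.{v} C] [MonoidalCategory C]

private lemma tensorμ_isIso [BraidedCategory C] (X₁ X₂ Y₁ Y₂ : C) :
    IsIso (tensorμ X₁ X₂ Y₁ Y₂) :=
  ⟨tensorδ X₁ X₂ Y₁ Y₂, tensorμ_tensorδ X₁ X₂ Y₁ Y₂, tensorδ_tensorμ X₁ X₂ Y₁ Y₂⟩

private lemma aux_assoc [BraidedCategory C]
    {X₁ X₂ Y₁ Y₂ Z₁ Z₂ U₁ U₂ V₁ V₂ T₁ T₂ : C}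
    (u₁ : X₁ ⊗ Y₁ ⟶ U₁) (u₂ : X₂ ⊗ Y₂ ⟶ U₂)
    (v₁ : Y₁ ⊗ Z₁ ⟶ V₁) (v₂ : Y₂ ⊗ Z₂ ⟶ V₂)
    (w₁ : U₁ ⊗ Z₁ ⟶ T₁) (w₂ : U₂ ⊗ Z₂ ⟶ T₂)
    (s₁ : X₁ ⊗ V₁ ⟶ T₁) (s₂ : X₂ ⊗ V₂ ⟶ T₂)
    (h₁ : (u₁ ▷ Z₁) ≫ w₁ = (α_ X₁ Y₁ Z₁).hom ≫ (X₁ ◁ v₁) ≫ s₁)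
    (h₂ : (u₂ ▷ Z₂) ≫ w₂ = (α_ X₂ Y₂ Z₂).hom ≫ (X₂ ◁ v₂) ≫ s₂) :
    ((tensorμ X₁ X₂ Y₁ Y₂ ≫ (u₁ ⊗ₘ u₂)) ▷ (Z₁ ⊗ Z₂)) ≫ tensorμ U₁ U₂ Z₁ Z₂ ≫ (w₁ ⊗ₘ w₂) =
      (α_ (X₁ ⊗ X₂) (Y₁ ⊗ Y₂) (Z₁ ⊗ Z₂)).hom ≫
        ((X₁ ⊗ X₂) ◁ (tensorμ Y₁ Y₂ Z₁ Z₂ ≫ (v₁ ⊗ₘ v₂))) ≫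
          tensorμ X₁ X₂ V₁ V₂ ≫ (s₁ ⊗ₘ s₂) := by
  calc ((tensorμ X₁ X₂ Y₁ Y₂ ≫ (u₁ ⊗ₘ u₂)) ▷ (Z₁ ⊗ Z₂)) ≫ tensorμ U₁ U₂ Z₁ Z₂ ≫ (w₁ ⊗ₘ w₂)
      = (tensorμ X₁ X₂ Y₁ Y₂ ▷ (Z₁ ⊗ Z₂)) ≫ tensorμ (X₁ ⊗ Y₁) (X₂ ⊗ Y₂) Z₁ Z₂ ≫
          (((u₁ ▷ Z₁) ≫ w₁) ⊗ₘ ((u₂ ▷ Z₂) ≫ w₂)) := by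
        rw [comp_whiskerRight, assoc, tensorμ_natural_left_assoc, ← tensorHom_comp_tensorHom]
    _ = (tensorμ X₁ X₂ Y₁ Y₂ ▷ (Z₁ ⊗ Z₂)) ≫ tensorμ (X₁ ⊗ Y₁) (X₂ ⊗ Y₂) Z₁ Z₂ ≫
          ((α_ X₁ Y₁ Z₁).hom ⊗ₘ (α_ X₂ Y₂ Z₂).hom) ≫
            ((X₁ ◁ v₁) ⊗ₘ (X₂ ◁ v₂)) ≫ (s₁ ⊗ₘ s₂) := by
        rw [h₁, h₂, ← tensorHom_comp_tensorHom, ← tensorHom_comp_tensorHom]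
    _ = (α_ (X₁ ⊗ X₂) (Y₁ ⊗ Y₂) (Z₁ ⊗ Z₂)).hom ≫ ((X₁ ⊗ X₂) ◁ tensorμ Y₁ Y₂ Z₁ Z₂) ≫
          tensorμ X₁ X₂ (Y₁ ⊗ Z₁) (Y₂ ⊗ Z₂) ≫ ((X₁ ◁ v₁) ⊗ₘ (X₂ ◁ v₂)) ≫ (s₁ ⊗ₘ s₂) := by
        rw [← tensor_associativity_assoc]
    _ = _ := by
        rw [MonoidalCategory.whiskerLeft_comp, assoc, tensorμ_natural_right_assoc]

/-- Proposition 4.2: the monoidal product of `𝕄`-morphisms `f : A ⇸ B`, `f' : A' ⇸ B'`,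
with components `(f₁ ⊗ₘ f'₁) ∘ (1 ⊗ c ⊗ 1)` and `(f₂ ⊗ₘ f'₂) ∘ (1 ⊗ c ⊗ 1)`, is an
`𝕄`-morphism `A ⊗ A' ⇸ B ⊗ B'`, multiplicative if `f` and `f'` are multiplicative and
dense if `f` and `f'` are dense. -/
theorem tensor_mmor [BraidedCategory C] (QD : QData C) {A A' B B' : C}
    (mA : A ⊗ A ⟶ A) (mA' : A' ⊗ A' ⟶ A') (mB : B ⊗ B ⟶ B) (mB' : B' ⊗ B' ⟶ B')
    (hA : SgAssoc A mA) (hA' : SgAssoc A' mA') (hB : SgAssoc B mB) (hB' : SgAssoc B' mB')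
    (f₁ : A ⊗ B ⟶ B) (f₂ : B ⊗ A ⟶ B) (hf : IsMMor mB f₁ f₂)
    (f'₁ : A' ⊗ B' ⟶ B') (f'₂ : B' ⊗ A' ⟶ B') (hf' : IsMMor mB' f'₁ f'₂) :
    IsMMor (tensorμ B B' B B' ≫ (mB ⊗ₘ mB'))
      (tensorμ A A' B B' ≫ (f₁ ⊗ₘ f'₁)) (tensorμ B B' A A' ≫ (f₂ ⊗ₘ f'₂)) ∧
    (Mult₁ mA f₁ → Mult₂ mA f₂ → Mult₁ mA' f'₁ → Mult₂ mA' f'₂ →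
      Mult₁ (tensorμ A A' A A' ≫ (mA ⊗ₘ mA')) (tensorμ A A' B B' ≫ (f₁ ⊗ₘ f'₁)) ∧
      Mult₂ (tensorμ A A' A A' ≫ (mA ⊗ₘ mA')) (tensorμ B B' A A' ≫ (f₂ ⊗ₘ f'₂))) ∧
    (QD.Q f₁ → QD.Q f₂ → QD.Q f'₁ → QD.Q f'₂ →
      QD.Q (tensorμ A A' B B' ≫ (f₁ ⊗ₘ f'₁)) ∧ QD.Q (tensorμ B B' A A' ≫ (f₂ ⊗ₘ f'₂))) := by
  refine ⟨?_, fun h₁ h₂ h'₁ h'₂ => ⟨?_, ?_⟩, fun q₁ q₂ q'₁ q'₂ => ⟨?_, ?_⟩⟩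
  · exact aux_assoc f₂ f'₂ f₁ f'₁ mB mB' mB mB' hf hf'
  · exact aux_assoc mA mA' f₁ f'₁ f₁ f'₁ f₁ f'₁ h₁ h'₁
  · exact (aux_assoc f₂ f'₂ mA mA' f₂ f'₂ f₂ f'₂ h₂.symm h'₂.symm).symm
  · exact QD.comp_mem _ _ (QD.iso_mem _ (tensorμ_isIso A A' B B'))
      (QD.tensor_mem _ _ q₁ q'₁)
  · exact QD.comp_mem _ _ (QD.iso_mem _ (tensorμ_isIso B B' A A'))
      (QD.tensor_mem _ _ q₂ q'₂)
end

section
/- The category M of non-degenerate semigroups with multiplication in Q and dense multiplicative M-morphisms is a monoidal category: the tensor product of objects is the usual tensor product of semigroups (with multiplication (m⊗m')∘(1⊗c⊗1)), the tensor product of morphisms is given componentwise by (f₁⊗f'₁)∘(1⊗c⊗1) and (f₂⊗f'₂)∘(1⊗c⊗1), the unit is I, and the associativity and unit constraints are inherited from C. In particular the tensor product is functorial: (g∙f)⊗(g'∙f') = (g⊗g')∙(f⊗f'). -/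
open CategoryTheory Category MonoidalCategory Limits

universe v u

variable {C : Type u} [Category.{v} C] [MonoidalCategory C]

set_option linter.unusedSectionVars false

namespace MMonoidalAux
variable {C : Type u} [Category.{v} C] [MonoidalCategory C] [BraidedCategory C]

theorem key {X X' Y Y' Z Z' T T' S S' W W' : C}
    (s : X ⊗ Y ⟶ T) (t : T ⊗ Z ⟶ W) (u : Y ⊗ Z ⟶ S) (v : X ⊗ S ⟶ W)
    (s' : X' ⊗ Y' ⟶ T') (t' : T' ⊗ Z' ⟶ W') (u' : Y' ⊗ Z' ⟶ S') (v' : X' ⊗ S' ⟶ W')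
    (h : (s ▷ Z) ≫ t = (α_ X Y Z).hom ≫ (X ◁ u) ≫ v)
    (h' : (s' ▷ Z') ≫ t' = (α_ X' Y' Z').hom ≫ (X' ◁ u') ≫ v') :
    ((tensorμ X X' Y Y' ≫ (s ⊗ₘ s')) ▷ (Z ⊗ Z')) ≫ (tensorμ T T' Z Z' ≫ (t ⊗ₘ t'))
      = (α_ (X ⊗ X') (Y ⊗ Y') (Z ⊗ Z')).hom ≫
        ((X ⊗ X') ◁ (tensorμ Y Y' Z Z' ≫ (u ⊗ₘ u'))) ≫ (tensorμ X X' S S' ≫ (v ⊗ₘ v')) := by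
  simp only [comp_whiskerRight_assoc, MonoidalCategory.whiskerLeft_comp_assoc]
  slice_lhs 2 3 => rw [tensorμ_natural_left]
  slice_lhs 3 4 => rw [tensorHom_comp_tensorHom, h, h', ← tensorHom_comp_tensorHom, ← tensorHom_comp_tensorHom]
  slice_lhs 1 3 => rw [tensor_associativity]
  slice_lhs 3 4 => rw [← tensorμ_natural_right]
  simp

section Defs
variable {A A' X Y : C} (m : A ⊗ A ⟶ A) (m' : A' ⊗ A' ⟶ A')

def S₁ (f : X ⟶ Y ⊗ (A ⊗ A')) : X ⊗ A ⟶ Y ⊗ (A ⊗ A') :=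
  (f ▷ A) ≫ (α_ Y (A ⊗ A') A).hom ≫
    (Y ◁ ((α_ A A' A).hom ≫ (A ◁ (β_ A' A).hom) ≫ (α_ A A A').inv ≫ (m ▷ A')))

def S₂ {W : C} (h : W ⟶ Y ⊗ (A ⊗ A')) : W ⊗ A' ⟶ Y ⊗ (A ⊗ A') :=
  (h ▷ A') ≫ (α_ Y (A ⊗ A') A').hom ≫ (Y ◁ ((α_ A A' A').hom ≫ (A ◁ m')))

def T₁ (g : X ⟶ (A ⊗ A') ⊗ Y) : A' ⊗ X ⟶ (A ⊗ A') ⊗ Y :=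
  (A' ◁ g) ≫ (α_ A' (A ⊗ A') Y).inv ≫
    (((α_ A' A A').inv ≫ ((β_ A' A).hom ▷ A') ≫ (α_ A A' A').hom ≫ (A ◁ m')) ▷ Y)

def T₂ {W : C} (h : W ⟶ (A ⊗ A') ⊗ Y) : A ⊗ W ⟶ (A ⊗ A') ⊗ Y :=
  (A ◁ h) ≫ (α_ A (A ⊗ A') Y).inv ≫ (((α_ A A A').inv ≫ (m ▷ A')) ▷ Y)

lemma liftS₂ {W : C} (h : W ⟶ Y ⊗ (A ⊗ A')) :
    S₂ (Y := Y) m' h = ((h ≫ (α_ Y A A').inv) ▷ A') ≫ (α_ (Y ⊗ A) A' A').hom ≫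
      ((Y ⊗ A) ◁ m') ≫ (α_ Y A A').hom := by
  dsimp [S₂]; monoidal

lemma liftS₁ (f : X ⟶ Y ⊗ (A ⊗ A')) :
    S₁ (Y := Y) m f = ((f ≫ (Y ◁ (β_ A' A).inv) ≫ (α_ Y A' A).inv) ▷ A) ≫
      (α_ (Y ⊗ A') A A).hom ≫ ((Y ⊗ A') ◁ m) ≫ (α_ Y A' A).hom ≫ (Y ◁ (β_ A' A).hom) := by
  have L1 : ((β_ A' A).inv ▷ A) ≫ (α_ A' A A).hom ≫ (A' ◁ m) ≫ (β_ A' A).hom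
      = (α_ A A' A).hom ≫ (A ◁ (β_ A' A).hom) ≫ (α_ A A A').inv ≫ (m ▷ A') := by
    slice_lhs 3 4 => rw [BraidedCategory.braiding_naturality_right]
    rw [BraidedCategory.braiding_tensor_right_hom]
    simp
  dsimp [S₁]
  rw [← L1]
  monoidal

lemma claimC (f : X ⟶ Y ⊗ (A ⊗ A')) :
    (f ▷ (A ⊗ A')) ≫ (α_ Y (A ⊗ A') (A ⊗ A')).hom ≫ (Y ◁ (tensorμ A A' A A' ≫ (m ⊗ₘ m')))
      = (α_ X A A').inv ≫ S₂ (Y := Y) m' (S₁ (Y := Y) m f) := by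
  dsimp [S₁, S₂, tensorμ]
  rw [MonoidalCategory.tensorHom_def]
  monoidal

lemma liftT₂ {W : C} (h : W ⟶ (A ⊗ A') ⊗ Y) :
    T₂ (Y := Y) m h = (A ◁ (h ≫ (α_ A A' Y).hom)) ≫ (α_ A A (A' ⊗ Y)).inv ≫
      (m ▷ (A' ⊗ Y)) ≫ (α_ A A' Y).inv := by
  dsimp [T₂]; monoidal

lemma liftT₁ (g : X ⟶ (A ⊗ A') ⊗ Y) :
    T₁ (Y := Y) m' g = (A' ◁ (g ≫ ((β_ A' A).inv ▷ Y) ≫ (α_ A' A Y).hom)) ≫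
      (α_ A' A' (A ⊗ Y)).inv ≫ (m' ▷ (A ⊗ Y)) ≫ (α_ A' A Y).inv ≫ ((β_ A' A).hom ▷ Y) := by
  have L1' : (A' ◁ (β_ A' A).inv) ≫ (α_ A' A' A).inv ≫ (m' ▷ A) ≫ (β_ A' A).hom
      = (α_ A' A A').inv ≫ ((β_ A' A).hom ▷ A') ≫ (α_ A A' A').hom ≫ (A ◁ m') := by
    slice_lhs 3 4 => rw [BraidedCategory.braiding_naturality_left]
    rw [BraidedCategory.braiding_tensor_left_hom]
    simp
  dsimp [T₁]
  rw [← L1']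
  monoidal

lemma claimC' (g : X ⟶ (A ⊗ A') ⊗ Y) :
    ((A ⊗ A') ◁ g) ≫ (α_ (A ⊗ A') (A ⊗ A') Y).inv ≫ ((tensorμ A A' A A' ≫ (m ⊗ₘ m')) ▷ Y)
      = (α_ A A' X).hom ≫ T₂ (Y := Y) m (T₁ (Y := Y) m' g) := by
  dsimp [T₁, T₂, tensorμ]
  rw [MonoidalCategory.tensorHom_def']
  monoidal

end Defs

theorem nonDeg_tensor {A A' : C} {m : A ⊗ A ⟶ A} {m' : A' ⊗ A' ⟶ A'}
    (hm : NonDeg A m) (hm' : NonDeg A' m') :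
    NonDeg (A ⊗ A') (tensorμ A A' A A' ≫ (m ⊗ₘ m')) := by
  constructor
  · intro X Y f g hfg
    dsimp only at hfg
    rw [claimC m m' f, claimC m m' g, cancel_epi, liftS₂, liftS₂] at hfg
    simp only [← assoc] at hfg
    rw [cancel_mono] at hfg
    simp only [assoc] at hfg
    have e3 := hm'.1 (X ⊗ A) (Y ⊗ A) hfg
    have e4 : S₁ (Y := Y) m f = S₁ (Y := Y) m g := by
      have := congrArg (fun t => t ≫ (α_ Y A A').hom) e3
      simpa using this
    rw [liftS₁, liftS₁] at e4
    simp only [← assoc] at e4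
    rw [cancel_mono, cancel_mono] at e4
    simp only [assoc] at e4
    have e6 := hm.1 X (Y ⊗ A') e4
    have := congrArg (fun t => t ≫ (α_ Y A' A).hom ≫ (Y ◁ (β_ A' A).hom)) e6
    simpa using this
  · intro X Y f g hfg
    dsimp only at hfg
    rw [claimC' m m' f, claimC' m m' g, cancel_epi, liftT₂, liftT₂] at hfg
    simp only [← assoc] at hfg
    rw [cancel_mono] at hfg
    simp only [assoc] at hfg
    have e3 := hm.2 (A' ⊗ X) (A' ⊗ Y) hfg
    have e4 : T₁ (Y := Y) m' f = T₁ (Y := Y) m' g := by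
      have := congrArg (fun t => t ≫ (α_ A A' Y).inv) e3
      simpa using this
    rw [liftT₁, liftT₁] at e4
    simp only [← assoc] at e4
    rw [cancel_mono, cancel_mono] at e4
    simp only [assoc] at e4
    have e6 := hm'.2 X (A ⊗ Y) e4
    have := congrArg (fun t => t ≫ (α_ A' A Y).inv ≫ ((β_ A' A).hom ▷ Y)) e6
    simpa using this

end MMonoidalAux

open MMonoidalAux in
/-- Proposition 4.3: the category `ℳ` is monoidal: the tensor product of objects is the
usual tensor product of semigroups (with multiplication `(m ⊗ m') ∘ (1 ⊗ c ⊗ 1)`), the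
tensor product of morphisms is given componentwise by `(f₁ ⊗ f'₁) ∘ (1 ⊗ c ⊗ 1)` and
`(f₂ ⊗ f'₂) ∘ (1 ⊗ c ⊗ 1)`, the unit is `I`, the constraints are inherited from `C`,
and in particular the tensor product is functorial: `(g∙f) ⊗ (g'∙f') = (g⊗g') ∙ (f⊗f')`. -/
theorem M_monoidal [BraidedCategory C] (QD : QData C) :
    -- tensor product of objects of ℳ is an object of ℳ
    (∀ X Y : MObj QD,
      SgAssoc (X.A ⊗ Y.A) (tensorμ X.A Y.A X.A Y.A ≫ (X.m ⊗ₘ Y.m)) ∧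
      NonDeg (X.A ⊗ Y.A) (tensorμ X.A Y.A X.A Y.A ≫ (X.m ⊗ₘ Y.m)) ∧
      QD.Q (tensorμ X.A Y.A X.A Y.A ≫ (X.m ⊗ₘ Y.m))) ∧
    -- tensor product of morphisms of ℳ is a morphism of ℳ
    (∀ (X X' Y Y' : MObj QD) (f : MHom X Y) (f' : MHom X' Y'),
      IsMMor (tensorμ Y.A Y'.A Y.A Y'.A ≫ (Y.m ⊗ₘ Y'.m))
        (tensorμ X.A X'.A Y.A Y'.A ≫ (f.f₁ ⊗ₘ f'.f₁))
        (tensorμ Y.A Y'.A X.A X'.A ≫ (f.f₂ ⊗ₘ f'.f₂)) ∧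
      Mult₁ (tensorμ X.A X'.A X.A X'.A ≫ (X.m ⊗ₘ X'.m))
        (tensorμ X.A X'.A Y.A Y'.A ≫ (f.f₁ ⊗ₘ f'.f₁)) ∧
      Mult₂ (tensorμ X.A X'.A X.A X'.A ≫ (X.m ⊗ₘ X'.m))
        (tensorμ Y.A Y'.A X.A X'.A ≫ (f.f₂ ⊗ₘ f'.f₂)) ∧
      QD.Q (tensorμ X.A X'.A Y.A Y'.A ≫ (f.f₁ ⊗ₘ f'.f₁)) ∧
      QD.Q (tensorμ Y.A Y'.A X.A X'.A ≫ (f.f₂ ⊗ₘ f'.f₂))) ∧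
    -- tensor product preserves identities: `i_X ⊗ i_Y = i_{X ⊗ Y}` componentwise
    (∀ X Y : MObj QD,
      tensorμ X.A Y.A X.A Y.A ≫ (X.m ⊗ₘ Y.m) =
        tensorμ X.A Y.A X.A Y.A ≫ ((MObj.idM X).f₁ ⊗ₘ (MObj.idM Y).f₁)) ∧
    -- functoriality: `(g ∙ f) ⊗ (g' ∙ f')` satisfies the defining equations
    -- of the composite `(g ⊗ g') ∙ (f ⊗ₘ f')`
    (∀ (X X' Y Y' Z Z' : MObj QD)
      (f : MHom X Y) (g : MHom Y Z) (f' : MHom X' Y') (g' : MHom Y' Z')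
      (p₁ : X.A ⊗ Z.A ⟶ Z.A) (p₂ : Z.A ⊗ X.A ⟶ Z.A)
      (p'₁ : X'.A ⊗ Z'.A ⟶ Z'.A) (p'₂ : Z'.A ⊗ X'.A ⟶ Z'.A),
      -- `p = g ∙ f` and `p' = g' ∙ f'`
      ((α_ X.A Y.A Z.A).hom ≫ (X.A ◁ g.f₁) ≫ p₁ = (f.f₁ ▷ Z.A) ≫ g.f₁) →
      ((g.f₂ ▷ X.A) ≫ p₂ = (α_ Z.A Y.A X.A).hom ≫ (Z.A ◁ f.f₂) ≫ g.f₂) →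
      ((α_ X'.A Y'.A Z'.A).hom ≫ (X'.A ◁ g'.f₁) ≫ p'₁ = (f'.f₁ ▷ Z'.A) ≫ g'.f₁) →
      ((g'.f₂ ▷ X'.A) ≫ p'₂ = (α_ Z'.A Y'.A X'.A).hom ≫ (Z'.A ◁ f'.f₂) ≫ g'.f₂) →
      ((α_ (X.A ⊗ X'.A) (Y.A ⊗ Y'.A) (Z.A ⊗ Z'.A)).hom ≫
          ((X.A ⊗ X'.A) ◁ (tensorμ Y.A Y'.A Z.A Z'.A ≫ (g.f₁ ⊗ₘ g'.f₁))) ≫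
          (tensorμ X.A X'.A Z.A Z'.A ≫ (p₁ ⊗ₘ p'₁)) =
        ((tensorμ X.A X'.A Y.A Y'.A ≫ (f.f₁ ⊗ₘ f'.f₁)) ▷ (Z.A ⊗ Z'.A)) ≫
          (tensorμ Y.A Y'.A Z.A Z'.A ≫ (g.f₁ ⊗ₘ g'.f₁))) ∧
      (((tensorμ Z.A Z'.A Y.A Y'.A ≫ (g.f₂ ⊗ₘ g'.f₂)) ▷ (X.A ⊗ X'.A)) ≫
          (tensorμ Z.A Z'.A X.A X'.A ≫ (p₂ ⊗ₘ p'₂)) =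
        (α_ (Z.A ⊗ Z'.A) (Y.A ⊗ Y'.A) (X.A ⊗ X'.A)).hom ≫
          ((Z.A ⊗ Z'.A) ◁ (tensorμ Y.A Y'.A X.A X'.A ≫ (f.f₂ ⊗ₘ f'.f₂))) ≫
          (tensorμ Z.A Z'.A Y.A Y'.A ≫ (g.f₂ ⊗ₘ g'.f₂)))) := by
  refine ⟨fun X Y => ⟨key X.m X.m X.m X.m Y.m Y.m Y.m Y.m X.assoc Y.assoc,
      nonDeg_tensor X.nondeg Y.nondeg,
      QD.comp_mem _ _ (QD.iso_mem _ ⟨tensorδ _ _ _ _, by simp, by simp⟩)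
        (QD.tensor_mem _ _ X.mQ Y.mQ)⟩,
    fun X X' Y Y' f f' => ⟨key f.f₂ Y.m f.f₁ Y.m f'.f₂ Y'.m f'.f₁ Y'.m f.compat f'.compat,
      key X.m f.f₁ f.f₁ f.f₁ X'.m f'.f₁ f'.f₁ f'.f₁ f.mult₁ f'.mult₁,
      (key f.f₂ f.f₂ X.m f.f₂ f'.f₂ f'.f₂ X'.m f'.f₂ f.mult₂.symm f'.mult₂.symm).symm,
      QD.comp_mem _ _ (QD.iso_mem _ ⟨tensorδ _ _ _ _, by simp, by simp⟩)
        (QD.tensor_mem _ _ f.dense₁ f'.dense₁),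
      QD.comp_mem _ _ (QD.iso_mem _ ⟨tensorδ _ _ _ _, by simp, by simp⟩)
        (QD.tensor_mem _ _ f.dense₂ f'.dense₂)⟩,
    fun X Y => rfl,
    fun X X' Y Y' Z Z' f g f' g' p₁ p₂ p'₁ p'₂ h1 h2 h3 h4 =>
      ⟨(key f.f₁ g.f₁ g.f₁ p₁ f'.f₁ g'.f₁ g'.f₁ p'₁ h1.symm h3.symm).symm,
       key g.f₂ p₂ f.f₂ g.f₂ g'.f₂ p'₂ f'.f₂ g'.f₂ h2 h4⟩⟩
end
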